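/- arXiv:2110.11784 — 6 statements merged into one kernel-verified Lean document; each statement's English description precedes it below -/
import Mathlib

section
/- The sorted-ℓ1 (SLOPE) function J(x) = Σ_{k=1}^{n} w_k |x|_{[k]}, where |x|_{[k]} denotes the k-th largest absolute entry of x, is a norm on ℝ^n whenever w_1 > 0 and w_1 ≥ w_2 ≥ ... ≥ w_n ≥ 0. -/
open Finset Matrix

noncomputable def kth {n : ℕ} (v : Fin n → ℝ) (k : ℕ) : ℝ :=
  if h : k < n then v (Tuple.sort (fun i => -v i) ⟨k, h⟩) else 0

noncomputable def absKth {n : ℕ} (v : Fin n → ℝ) (k : ℕ) : ℝ :=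
  kth (fun i => |v i|) k

noncomputable def slopeNorm {n : ℕ} (w : ℕ → ℝ) (x : Fin n → ℝ) : ℝ :=
  ∑ k ∈ Finset.range n, w k * absKth x k

noncomputable def dualNorm {n : ℕ} (J : (Fin n → ℝ) → ℝ) (g : Fin n → ℝ) : ℝ :=
  sSup {t : ℝ | ∃ x : Fin n → ℝ, J x ≤ 1 ∧ t = ∑ i, g i * x i}

def dropIdx {n : ℕ} (ℓ : Fin n) (v : Fin n → ℝ) : Fin (n - 1) → ℝ :=
  fun j => if h : (j : ℕ) < (ℓ : ℕ) then v ⟨j, lt_trans h ℓ.isLt⟩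
           else v ⟨(j : ℕ) + 1, by have := j.isLt; omega⟩

noncomputable def sortPerm {n : ℕ} (x : Fin n → ℝ) : Equiv.Perm (Fin n) :=
  Tuple.sort (fun i => -|x i|)

lemma slope_eq {n : ℕ} (w : ℕ → ℝ) (x : Fin n → ℝ) :
    slopeNorm w x = ∑ k : Fin n, w k * |x (sortPerm x k)| := by
  rw [slopeNorm, ← Fin.sum_univ_eq_sum_range (fun k => w k * absKth x k) n]
  refine Finset.sum_congr rfl fun k _ => ?_
  simp [absKth, kth, k.isLt, sortPerm, Fin.eta]

lemma anti_sorted {n : ℕ} (x : Fin n → ℝ) :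
    Antitone (fun k : Fin n => |x (sortPerm x k)|) := by
  intro i j hij
  have := Tuple.monotone_sort (fun i => -|x i|) hij
  simpa [sortPerm] using this

section main
variable {n : ℕ} (w : ℕ → ℝ)

lemma wnonneg (hwa : ∀ i j : ℕ, i ≤ j → j < n → w j ≤ w i) (hwn : 0 ≤ w (n - 1))
    (k : Fin n) : 0 ≤ w k :=
  le_trans hwn (hwa k (n - 1) (by omega) (by have := k.isLt; omega))

/-- Rearrangement bound: any permuted weighted sum is at most the SLOPE norm. -/
lemma sum_perm_le (hwa : ∀ i j : ℕ, i ≤ j → j < n → w j ≤ w i)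
    (x : Fin n → ℝ) (τ : Equiv.Perm (Fin n)) :
    ∑ k : Fin n, w k * |x (τ k)| ≤ slopeNorm w x := by
  set a : Fin n → ℝ := fun k => |x (sortPerm x k)| with ha
  have hanti : Antitone a := anti_sorted x
  have hmono : Monovary (fun k : Fin n => w k) a := by
    intro i j hij
    have hji : j < i := by
      by_contra h
      exact absurd (hanti (le_of_not_gt h)) (not_le.mpr hij)
    exact hwa j i hji.le i.isLt
  have key := hmono.sum_smul_comp_perm_le_sum_smul (σ := (sortPerm x)⁻¹ * τ)
  rw [slope_eq]
  calc ∑ k : Fin n, w k * |x (τ k)|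
      = ∑ k : Fin n, w k • a (((sortPerm x)⁻¹ * τ) k) := by
        refine Finset.sum_congr rfl fun k _ => ?_
        simp [ha, smul_eq_mul, Equiv.Perm.mul_apply]
    _ ≤ ∑ k : Fin n, w k • a k := key
    _ = ∑ k : Fin n, w k * a k := rfl

/-- If `|x ∘ τ|` is antitone then the permuted weighted sum equals the SLOPE norm. -/
lemma sum_perm_eq (x : Fin n → ℝ) (τ : Equiv.Perm (Fin n))
    (h : Antitone fun k : Fin n => |x (τ k)|) :
    ∑ k : Fin n, w k * |x (τ k)| = slopeNorm w x := by
  have h1 : Monotone ((fun i => -|x i|) ∘ τ) := by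
    intro i j hij; simpa using h hij
  have h2 : Monotone ((fun i => -|x i|) ∘ sortPerm x) :=
    Tuple.monotone_sort (fun i => -|x i|)
  have := Tuple.unique_monotone h1 h2
  rw [slope_eq]
  refine Finset.sum_congr rfl fun k _ => ?_
  have hk := congrFun this k
  simp only [Function.comp_apply, neg_inj] at hk
  rw [hk]

end main

theorem slopeNorm_is_norm {n : ℕ} (hn : 0 < n) (w : ℕ → ℝ)
    (hw0 : 0 < w 0) (hwa : ∀ i j : ℕ, i ≤ j → j < n → w j ≤ w i)
    (hwn : 0 ≤ w (n - 1)) :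
    (∀ x : Fin n → ℝ, 0 ≤ slopeNorm w x) ∧
    (∀ x : Fin n → ℝ, slopeNorm w x = 0 ↔ x = 0) ∧
    (∀ (a : ℝ) (x : Fin n → ℝ), slopeNorm w (a • x) = |a| * slopeNorm w x) ∧
    (∀ x y : Fin n → ℝ, slopeNorm w (x + y) ≤ slopeNorm w x + slopeNorm w y) := by
  have hwpos := wnonneg w hwa hwn
  have nonneg : ∀ x : Fin n → ℝ, 0 ≤ slopeNorm w x := by
    intro x
    rw [slope_eq]
    exact Finset.sum_nonneg fun k _ => mul_nonneg (hwpos k) (abs_nonneg _)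
  refine ⟨nonneg, ?_, ?_, ?_⟩
  · -- definiteness
    intro x
    constructor
    · intro hJ
      funext i
      have hle := sum_perm_le w hwa x (Equiv.swap ⟨0, hn⟩ i)
      rw [hJ] at hle
      have hterm : w (⟨0, hn⟩ : Fin n) * |x (Equiv.swap ⟨0, hn⟩ i ⟨0, hn⟩)| ≤
          ∑ k : Fin n, w k * |x (Equiv.swap ⟨0, hn⟩ i k)| :=
        Finset.single_le_sum (f := fun k : Fin n => w k * |x (Equiv.swap ⟨0, hn⟩ i k)|)
          (fun k _ => mul_nonneg (hwpos k) (abs_nonneg _)) (mem_univ _)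
      rw [Equiv.swap_apply_left] at hterm
      have : w 0 * |x i| ≤ 0 := le_trans hterm hle
      have hx : |x i| ≤ 0 := by
        nlinarith [abs_nonneg (x i)]
      simpa using le_antisymm hx (abs_nonneg _)
    · intro hx
      subst hx
      rw [slope_eq]
      simp
  · -- homogeneity
    intro a x
    have hanti : Antitone fun k : Fin n => |(a • x) (sortPerm x k)| := by
      have : (fun k : Fin n => |(a • x) (sortPerm x k)|)
          = fun k => |a| * |x (sortPerm x k)| := by
        funext k; simp [abs_mul]
      rw [this]
      exact (anti_sorted x).const_mul (abs_nonneg a)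
    rw [← sum_perm_eq w (a • x) (sortPerm x) hanti, slope_eq, Finset.mul_sum]
    refine Finset.sum_congr rfl fun k _ => ?_
    simp [abs_mul]; ring
  · -- triangle
    intro x y
    set τ := sortPerm (x + y)
    rw [slope_eq w (x + y)]
    calc ∑ k : Fin n, w k * |(x + y) (τ k)|
        ≤ ∑ k : Fin n, (w k * |x (τ k)| + w k * |y (τ k)|) := by
          refine Finset.sum_le_sum fun k _ => ?_
          rw [← mul_add]
          exact mul_le_mul_of_nonneg_left (by simpa using abs_add_le (x (τ k)) (y (τ k))) (hwpos k)
      _ = (∑ k : Fin n, w k * |x (τ k)|) + ∑ k : Fin n, w k * |y (τ k)| :=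
          Finset.sum_add_distrib
      _ ≤ slopeNorm w x + slopeNorm w y :=
          add_le_add (sum_perm_le w hwa x τ) (sum_perm_le w hwa y τ)
end

section
/- Let J be the SLOPE norm with weights w_1 ≥ ... ≥ w_n ≥ 0, w_1 > 0. Its dual norm satisfies J^D(g) = max_{q ∈ {1,...,n}} ( Σ_{k=1}^{q} |g|_{[k]} ) / ( Σ_{k=1}^{q} w_k ), where |g|_{[k]} is the k-th largest absolute entry of g. -/
open Finset Matrix

section Aux
variable {n : ℕ}

lemma absKth_eq (v : Fin n → ℝ) (k : ℕ) (h : k < n) :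
    absKth v k = |v (Tuple.sort (fun i => -|v i|) ⟨k, h⟩)| := by
  simp [absKth, kth, h]

lemma absKth_nonneg (v : Fin n → ℝ) (k : ℕ) : 0 ≤ absKth v k := by
  unfold absKth kth
  split <;> simp [abs_nonneg]

lemma absKth_eq_zero (v : Fin n → ℝ) (k : ℕ) (h : ¬ k < n) : absKth v k = 0 := by
  simp [absKth, kth, h]

lemma antitone_sorted (v : Fin n → ℝ) :
    Antitone (fun k : Fin n => |v (Tuple.sort (fun i => -|v i|) k)|) := by
  have h := Tuple.monotone_sort (fun i : Fin n => -|v i|)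
  intro a b hab
  have := h hab
  simp only [Function.comp] at this
  linarith

lemma antitone_absKth (v : Fin n → ℝ) : Antitone (fun k : ℕ => absKth v k) := by
  intro a b hab
  simp only []
  by_cases hb : b < n
  · have ha : a < n := lt_of_le_of_lt hab hb
    rw [absKth_eq v a ha, absKth_eq v b hb]
    exact antitone_sorted v (show (⟨a, ha⟩ : Fin n) ≤ ⟨b, hb⟩ from hab)
  · rw [absKth_eq_zero v b hb]; exact absKth_nonneg v a

lemma abel_bound (c b : ℕ → ℝ) (hb : Antitone b)
    (hc : ∀ m, ∑ k ∈ range m, c k ≤ 0) :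
    ∀ m, ∑ k ∈ range m, c k * b k ≤ (∑ k ∈ range m, c k) * b m := by
  intro m
  induction m with
  | zero => simp
  | succ m ih =>
    have hC : ∑ k ∈ range m, c k + c m ≤ 0 := by
      have := hc (m+1); rwa [sum_range_succ] at this
    have h2 : (∑ k ∈ range m, c k + c m) * b m ≤ (∑ k ∈ range m, c k + c m) * b (m+1) :=
      mul_le_mul_of_nonpos_left (hb (Nat.le_succ m)) hC
    rw [sum_range_succ, sum_range_succ]
    nlinarith [ih]

lemma rearrange (f h : Fin n → ℝ) (hf : Antitone f) (hh : Antitone h) (π : Equiv.Perm (Fin n)) :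
    ∑ i, f i * h (π i) ≤ ∑ i, f i * h i := by
  apply Monovary.sum_mul_comp_perm_le_sum_mul
  intro i j hij
  have hji : ¬ i ≤ j := fun hle => absurd (hh hle) (not_le.mpr hij)
  exact hf (le_of_not_ge hji)

lemma card_filter_val_lt (m : ℕ) (hm : m ≤ n) :
    (univ.filter (fun k : Fin n => (k : ℕ) < m)).card = m := by
  have : (univ.filter (fun k : Fin n => (k : ℕ) < m)) = (range m).attachFin
      (fun k hk => lt_of_lt_of_le (mem_range.mp hk) hm) := by
    ext k
    simp [Finset.mem_attachFin]
  rw [this, Finset.card_attachFin, Finset.card_range]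

lemma antitone_binary (u : Fin n → ℝ) (hu : Antitone u) (c : ℝ) (hc : 0 < c)
    (hbin : ∀ k, u k = c ∨ u k = 0)
    (m : ℕ) (hm : (univ.filter (fun k => u k = c)).card = m) :
    ∀ k : Fin n, u k = if (k : ℕ) < m then c else 0 := by
  have hmn : m ≤ n := by
    rw [← hm]
    exact le_trans (card_filter_le _ _) (by simp)
  have key : univ.filter (fun k : Fin n => u k = c) =
      univ.filter (fun k : Fin n => (k : ℕ) < m) := by
    apply Finset.eq_of_subset_of_card_le
    · intro k hk
      simp only [mem_filter, mem_univ, true_and] at hk ⊢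
      have hsub : Iic k ⊆ univ.filter (fun j : Fin n => u j = c) := by
        intro j hj
        simp only [mem_Iic] at hj
        simp only [mem_filter, mem_univ, true_and]
        rcases hbin j with h | h
        · exact h
        · exfalso; have := hu hj; rw [hk, h] at this; linarith
      have := Finset.card_le_card hsub
      rw [Fin.card_Iic, hm] at this
      omega
    · rw [card_filter_val_lt m hmn, hm]
  intro k
  by_cases hk : (k : ℕ) < m
  · have : k ∈ univ.filter (fun k : Fin n => (k:ℕ) < m) := by simp [hk]
    rw [← key, mem_filter] at this
    simp [hk, this.2]
  · rw [if_neg hk]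
    rcases hbin k with h | h
    · exfalso
      have : k ∈ univ.filter (fun k : Fin n => u k = c) := by simp [h]
      rw [key, mem_filter] at this
      exact hk this.2
    · exact h
end Aux

theorem slope_dualNorm_eq {n : ℕ} (hn : 0 < n) (w : ℕ → ℝ)
    (hw0 : 0 < w 0) (hwa : ∀ i j : ℕ, i ≤ j → j < n → w j ≤ w i)
    (hwn : 0 ≤ w (n - 1)) (g : Fin n → ℝ) :
    dualNorm (slopeNorm w) g =
      (Finset.range n).sup' (Finset.nonempty_range_iff.mpr hn.ne')
        (fun q => (∑ k ∈ Finset.range (q + 1), absKth g k) /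
                  (∑ k ∈ Finset.range (q + 1), w k)) := by
  classical
  set D := (Finset.range n).sup' (Finset.nonempty_range_iff.mpr hn.ne')
        (fun q => (∑ k ∈ Finset.range (q + 1), absKth g k) /
                  (∑ k ∈ Finset.range (q + 1), w k)) with hDdef
  have hwpos : ∀ k, k < n → 0 ≤ w k := fun k hk =>
    le_trans hwn (hwa k (n-1) (by omega) (by omega))
  have hSpos : ∀ q, q < n → 0 < ∑ k ∈ range (q+1), w k := by
    intro q hq
    apply Finset.sum_pos'
    · intro k hk; exact hwpos k (by simp at hk; omega)
    · exact ⟨0, by simp, hw0⟩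
  have hratio : ∀ q, q < n →
      (∑ k ∈ range (q+1), absKth g k) / (∑ k ∈ range (q+1), w k) ≤ D :=
    fun q hq => Finset.le_sup' (fun q => (∑ k ∈ Finset.range (q + 1), absKth g k) /
                  (∑ k ∈ Finset.range (q + 1), w k)) (mem_range.mpr hq)
  have hDnonneg : 0 ≤ D := by
    refine le_trans ?_ (hratio 0 hn)
    apply div_nonneg
    · exact Finset.sum_nonneg fun k _ => absKth_nonneg g k
    · exact (hSpos 0 hn).le
  have hpartial : ∀ m, m ≤ n →
      ∑ k ∈ range m, absKth g k ≤ D * ∑ k ∈ range m, w k := by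
    intro m hm
    rcases Nat.eq_zero_or_pos m with rfl | hmpos
    · simp
    · obtain ⟨q, rfl⟩ : ∃ q, m = q + 1 := ⟨m - 1, by omega⟩
      have hq : q < n := by omega
      have := hratio q hq
      rw [div_le_iff₀ (hSpos q hq)] at this
      linarith [this]
  -- upper bound for any x
  have hUB : ∀ x : Fin n → ℝ, ∑ i, g i * x i ≤ D * slopeNorm w x := by
    intro x
    have s1 : ∑ i, g i * x i ≤ ∑ i, |g i| * |x i| :=
      Finset.sum_le_sum fun i _ => le_trans (le_abs_self _) (le_of_eq (abs_mul _ _))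
    have s2 : ∑ i, |g i| * |x i|
        = ∑ i, |g (Tuple.sort (fun i => -|g i|) i)| * |x (Tuple.sort (fun i => -|g i|) i)| :=
      (Equiv.sum_comp (Tuple.sort (fun i => -|g i|)) (fun i => |g i| * |x i|)).symm
    have s3 : ∑ i, |g (Tuple.sort (fun i => -|g i|) i)| * |x (Tuple.sort (fun i => -|g i|) i)|
        ≤ ∑ i, |g (Tuple.sort (fun i => -|g i|) i)| * |x (Tuple.sort (fun i => -|x i|) i)| := by
      have := rearrange (fun i => |g (Tuple.sort (fun i => -|g i|) i)|)
        (fun i => |x (Tuple.sort (fun i => -|x i|) i)|)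
        (antitone_sorted g) (antitone_sorted x)
        ((Tuple.sort (fun i => -|x i|))⁻¹ * (Tuple.sort (fun i => -|g i|)))
      simpa using this
    have s4 : ∑ i, |g (Tuple.sort (fun i => -|g i|) i)| * |x (Tuple.sort (fun i => -|x i|) i)|
        = ∑ k ∈ range n, absKth g k * absKth x k := by
      rw [← Fin.sum_univ_eq_sum_range (fun k => absKth g k * absKth x k) n]
      apply Finset.sum_congr rfl
      intro i _
      rw [absKth_eq g i i.isLt, absKth_eq x i i.isLt]
    -- Abel step
    set c : ℕ → ℝ := fun k => if k < n then absKth g k - D * w k else 0 with hcdef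
    have hcs : ∀ m, ∑ k ∈ range m, c k ≤ 0 := by
      intro m
      have key : ∀ m', m' ≤ n → ∑ k ∈ range m', c k ≤ 0 := by
        intro m' hm'
        have : ∑ k ∈ range m', c k
            = ∑ k ∈ range m', (absKth g k - D * w k) :=
          Finset.sum_congr rfl fun k hk => if_pos (lt_of_lt_of_le (mem_range.mp hk) hm')
        rw [this, Finset.sum_sub_distrib, ← Finset.mul_sum]
        have := hpartial m' hm'
        linarith
      rcases le_or_gt m n with h | h
      · exact key m h
      · have : ∑ k ∈ range m, c k = ∑ k ∈ range n, c k := by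
          symm
          apply Finset.sum_subset (Finset.range_subset_range.mpr h.le)
          intro k _ hk
          simp only [mem_range, not_lt] at hk
          simp [hcdef, not_lt.mpr hk]
        rw [this]; exact key n le_rfl
    have s5 : ∑ k ∈ range n, absKth g k * absKth x k ≤ D * slopeNorm w x := by
      have h0 := abel_bound c (fun k => absKth x k) (antitone_absKth x) hcs n
      rw [absKth_eq_zero x n (lt_irrefl n), mul_zero] at h0
      have h1 : ∑ k ∈ range n, c k * absKth x k
          = ∑ k ∈ range n, (absKth g k - D * w k) * absKth x k :=
        Finset.sum_congr rfl fun k hk => by rw [hcdef]; simp [mem_range.mp hk]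
      rw [h1] at h0
      have h2 : ∑ k ∈ range n, (absKth g k - D * w k) * absKth x k
          = ∑ k ∈ range n, absKth g k * absKth x k
            - D * ∑ k ∈ range n, w k * absKth x k := by
        rw [Finset.mul_sum, ← Finset.sum_sub_distrib]
        apply Finset.sum_congr rfl
        intro k _; ring
      rw [h2] at h0
      unfold slopeNorm
      linarith
    calc ∑ i, g i * x i ≤ ∑ i, |g i| * |x i| := s1
      _ = _ := s2
      _ ≤ _ := s3
      _ = _ := s4
      _ ≤ D * slopeNorm w x := s5
  -- the set
  have hub' : ∀ t ∈ {t : ℝ | ∃ x : Fin n → ℝ, slopeNorm w x ≤ 1 ∧ t = ∑ i, g i * x i}, t ≤ D := by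
    rintro t ⟨x, hx1, rfl⟩
    calc ∑ i, g i * x i ≤ D * slopeNorm w x := hUB x
      _ ≤ D * 1 := mul_le_mul_of_nonneg_left hx1 hDnonneg
      _ = D := mul_one D
  -- membership: construct optimal x
  obtain ⟨q, hqmem, hqD⟩ := Finset.exists_mem_eq_sup' (Finset.nonempty_range_iff.mpr hn.ne')
        (fun q => (∑ k ∈ Finset.range (q + 1), absKth g k) /
                  (∑ k ∈ Finset.range (q + 1), w k))
  have hq : q < n := mem_range.mp hqmem
  have hq1n : q + 1 ≤ n := hq
  set Sw := ∑ k ∈ range (q+1), w k with hSwdef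
  have hSw : 0 < Sw := hSpos q hq
  set x : Fin n → ℝ := fun i =>
    if (((Tuple.sort (fun i => -|g i|))⁻¹ i : Fin n) : ℕ) < q+1
    then (if g i < 0 then -1 else 1)/Sw else 0 with hxdef
  have habs : ∀ i, |x i| =
      if (((Tuple.sort (fun i => -|g i|))⁻¹ i : Fin n) : ℕ) < q+1 then 1/Sw else 0 := by
    intro i
    by_cases h1 : (((Tuple.sort (fun i => -|g i|))⁻¹ i : Fin n) : ℕ) < q+1
    · rw [if_pos h1]
      have hx : x i = (if g i < 0 then -1 else 1)/Sw := by
        simp only [hxdef]; rw [if_pos h1]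
      rw [hx]
      by_cases h2 : g i < 0 <;> simp [h2, abs_div, abs_of_pos hSw, hSw.le]
    · rw [if_neg h1]
      have hx : x i = 0 := by simp only [hxdef]; rw [if_neg h1]
      simp [hx]
  have hsum : ∑ i, g i * x i = (∑ k ∈ range (q+1), absKth g k) / Sw := by
    rw [← Equiv.sum_comp (Tuple.sort (fun i => -|g i|)) (fun i => g i * x i)]
    have hterm : ∀ i : Fin n, g (Tuple.sort (fun i => -|g i|) i) * x (Tuple.sort (fun i => -|g i|) i)
        = if (i : ℕ) < q+1 then absKth g i / Sw else 0 := by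
      intro i
      rw [hxdef]
      simp only [Equiv.Perm.inv_def, Equiv.symm_apply_apply]
      split
      · rw [absKth_eq g i i.isLt]
        split
        next hneg => rw [abs_of_neg hneg]; field_simp
        next hneg => rw [abs_of_nonneg (not_lt.mp hneg)]; field_simp
      · rw [mul_zero]
    rw [Finset.sum_congr rfl (fun i _ => hterm i)]
    rw [Fin.sum_univ_eq_sum_range (fun k => if k < q+1 then absKth g k / Sw else 0) n]
    rw [← Finset.sum_filter]
    have : (range n).filter (fun k => k < q+1) = range (q+1) := by
      ext k; simp; omega
    rw [this, ← Finset.sum_div]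
  have hnorm : slopeNorm w x = 1 := by
    have hcard : (univ.filter (fun k : Fin n =>
        |x (Tuple.sort (fun i => -|x i|) k)| = 1/Sw)).card = q + 1 := by
      have e1 : (univ.filter (fun k : Fin n => |x (Tuple.sort (fun i => -|x i|) k)| = 1/Sw))
          = (univ.filter (fun i : Fin n => |x i| = 1/Sw)).map
              (Tuple.sort (fun i => -|x i|))⁻¹.toEmbedding := by
        ext k
        simp only [mem_filter, mem_univ, true_and, Finset.mem_map, Equiv.coe_toEmbedding]
        constructor
        · intro h
          exact ⟨Tuple.sort (fun i => -|x i|) k, h, by simp⟩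
        · rintro ⟨a, ha, rfl⟩
          simpa using ha
      have e2 : (univ.filter (fun i : Fin n => |x i| = 1/Sw))
          = (univ.filter (fun j : Fin n => (j : ℕ) < q+1)).map
              (Tuple.sort (fun i => -|g i|)).toEmbedding := by
        ext i
        simp only [mem_filter, mem_univ, true_and, Finset.mem_map, Equiv.coe_toEmbedding]
        rw [habs i]
        constructor
        · intro h
          have hcond : (((Tuple.sort (fun i => -|g i|))⁻¹ i : Fin n) : ℕ) < q+1 := by
            by_contra hc
            rw [if_neg hc] at h
            exact absurd h.symm (by positivity)
          exact ⟨(Tuple.sort (fun i => -|g i|))⁻¹ i, hcond, by simp⟩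
        · rintro ⟨a, ha, rfl⟩
          simp only [Equiv.Perm.inv_def, Equiv.symm_apply_apply]
          rw [if_pos ha]
      rw [e1, Finset.card_map, e2, Finset.card_map, card_filter_val_lt (q+1) hq1n]
    have hbin : ∀ k : Fin n, |x (Tuple.sort (fun i => -|x i|) k)| = 1/Sw
        ∨ |x (Tuple.sort (fun i => -|x i|) k)| = 0 := by
      intro k
      rw [habs]
      split
      · left; rfl
      · right; rfl
    have hval := antitone_binary (fun k : Fin n => |x (Tuple.sort (fun i => -|x i|) k)|)
        (antitone_sorted x) (1/Sw) (by positivity) hbin (q+1) hcard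
    have hval' : ∀ k, (hkn : k < n) → absKth x k = if k < q + 1 then 1/Sw else 0 := by
      intro k hkn
      rw [absKth_eq x k hkn]
      exact hval ⟨k, hkn⟩
    unfold slopeNorm
    have : ∀ k ∈ range n, w k * absKth x k = if k < q+1 then w k * (1/Sw) else 0 := by
      intro k hk
      have hkn := mem_range.mp hk
      rw [hval' k hkn]
      split <;> simp
    rw [Finset.sum_congr rfl this, ← Finset.sum_filter]
    have heq : (range n).filter (fun k => k < q+1) = range (q+1) := by
      ext k; simp; omega
    rw [heq]
    have : ∑ k ∈ range (q+1), w k * (1/Sw) = Sw * (1/Sw) := by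
      rw [← Finset.sum_mul]
    rw [this, mul_one_div, div_self hSw.ne']
  have hmem : D ∈ {t : ℝ | ∃ x : Fin n → ℝ, slopeNorm w x ≤ 1 ∧ t = ∑ i, g i * x i} := by
    exact ⟨x, hnorm.le, by rw [hsum, hDdef]; exact hqD⟩
  rw [show dualNorm (slopeNorm w) g
      = sSup {t : ℝ | ∃ x : Fin n → ℝ, slopeNorm w x ≤ 1 ∧ t = ∑ i, g i * x i} from rfl]
  apply le_antisymm
  · exact Real.sSup_le hub' hDnonneg
  · exact le_csSup ⟨D, hub'⟩ hmem
end

section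
/- Let u* solve the dual SLOPE problem max_u ½‖y‖² − ½‖y − u‖² subject to Σ_{k=1}^{q} |Aᵀu|_{[k]} ≤ λ Σ_{k=1}^{q} w_k for all q ∈ {1,...,n}, and let x* be a (any) minimizer of the SLOPE primal problem. If for some index ℓ one has, for every q ∈ {1,...,n}, the strict inequality |aₗᵀ u*| + Σ_{k=1}^{q−1} |A_{∖ℓ}ᵀ u*|_{[k]} < λ Σ_{k=1}^{q} w_k (where A_{∖ℓ} is A with column ℓ removed), then x*_ℓ = 0. -/
open Finset Matrix

namespace SlopeAux

variable {n : ℕ}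

noncomputable def sp (v : Fin n → ℝ) : Equiv.Perm (Fin n) :=
  Tuple.sort (fun i => -|v i|)

lemma absKth_eq (v : Fin n → ℝ) (k : ℕ) (h : k < n) :
    absKth v k = |v (sp v ⟨k, h⟩)| := by
  simp only [absKth, kth, sp, dif_pos h]

lemma absKth_nonneg (v : Fin n → ℝ) (k : ℕ) : 0 ≤ absKth v k := by
  by_cases h : k < n
  · rw [absKth_eq v k h]; exact abs_nonneg _
  · simp [absKth, kth, h]

lemma absKth_antitone (v : Fin n → ℝ) {k k' : ℕ} (hkk : k ≤ k') :
    absKth v k' ≤ absKth v k := by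
  by_cases h' : k' < n
  · have h : k < n := lt_of_le_of_lt hkk h'
    rw [absKth_eq v k h, absKth_eq v k' h']
    have h2 := Tuple.monotone_sort (fun i => -|v i|)
      (a := ⟨k, h⟩) (b := ⟨k', h'⟩) (by simpa [Fin.le_def] using hkk)
    simp only [Function.comp_apply] at h2
    have h3 : -|v (Tuple.sort (fun i => -|v i|) ⟨k, h⟩)| ≤
        -|v (Tuple.sort (fun i => -|v i|) ⟨k', h'⟩)| := h2
    simp only [sp]
    linarith
  · have hz : absKth v k' = 0 := by simp [absKth, kth, h']
    rw [hz]; exact absKth_nonneg v k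

lemma absKth_zero_of_ge (v : Fin n → ℝ) {k : ℕ} (h : n ≤ k) : absKth v k = 0 := by
  simp [absKth, kth, not_lt.mpr h]

noncomputable def S (q : ℕ) (v : Fin n → ℝ) : ℝ := ∑ k ∈ Finset.range q, absKth v k

lemma S_nonneg (q : ℕ) (v : Fin n → ℝ) : 0 ≤ S q v :=
  Finset.sum_nonneg fun k _ => absKth_nonneg v k

lemma S_mono (q q' : ℕ) (h : q ≤ q') (v : Fin n → ℝ) : S q v ≤ S q' v :=
  Finset.sum_le_sum_of_subset_of_nonneg (Finset.range_subset_range.mpr h)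
    (fun k _ _ => absKth_nonneg v k)

lemma strictMono_le_apply {q : ℕ} (f : Fin q → Fin n) (hf : StrictMono f) (k : Fin q) :
    (k : ℕ) ≤ (f k : ℕ) := by
  induction' hk : (k : ℕ) with i ih generalizing k
  · exact Nat.zero_le _
  · have hi : i < q := by have := k.isLt; omega
    have h1 : (⟨i, hi⟩ : Fin q) < k := by simp [Fin.lt_def, hk]
    have h2 := hf h1
    have h3 := ih ⟨i, hi⟩ rfl
    simp only [Fin.lt_def] at h2
    omega

lemma sum_range_eq_attachFin (q : ℕ) (hq : q ≤ n) (f : Fin n → ℝ) :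
    ∑ j ∈ (Finset.range q).attachFin (fun m hm => by simp at hm; omega), f j
      = ∑ k ∈ Finset.range q, (if h : k < n then f ⟨k, h⟩ else 0) := by
  apply Finset.sum_bij (fun (j : Fin n) _ => (j : ℕ))
  · intro a ha; simpa using (Finset.mem_attachFin _).mp ha
  · intro a _ b _ h; exact Fin.ext h
  · intro b hb; simp at hb
    exact ⟨⟨b, by omega⟩, (Finset.mem_attachFin _).mpr (by simpa), rfl⟩
  · intro a ha; rw [dif_pos a.isLt]

/-- The canonical subset realizing `S q v` (when `q ≤ n`). -/
noncomputable def topSet (q : ℕ) (hq : q ≤ n) (v : Fin n → ℝ) : Finset (Fin n) :=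
  ((Finset.range q).attachFin (fun m hm => by simp at hm; omega)).image (sp v)

lemma card_topSet (q : ℕ) (hq : q ≤ n) (v : Fin n → ℝ) : (topSet q hq v).card = q := by
  rw [topSet, Finset.card_image_of_injective _ (sp v).injective, Finset.card_attachFin,
    Finset.card_range]

/-- Summing any function over the canonical top subset of `v`. -/
lemma sum_topSet_gen (q : ℕ) (hq : q ≤ n) (v : Fin n → ℝ) (f : Fin n → ℝ) :
    ∑ i ∈ topSet q hq v, f i
      = ∑ k ∈ Finset.range q, (if h : k < n then f (sp v ⟨k, h⟩) else 0) := by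
  rw [topSet, Finset.sum_image (fun a _ b _ h => (sp v).injective h),
    sum_range_eq_attachFin q hq (fun j => f (sp v j))]

lemma sum_topSet (q : ℕ) (hq : q ≤ n) (v : Fin n → ℝ) :
    ∑ i ∈ topSet q hq v, |v i| = S q v := by
  rw [sum_topSet_gen q hq v (fun i => |v i|), S]
  apply Finset.sum_congr rfl
  intro k hk
  simp only [Finset.mem_range] at hk
  rw [dif_pos (lt_of_lt_of_le hk hq), absKth_eq v k (lt_of_lt_of_le hk hq)]

/-- Any subset sum of `|v|` is dominated by the corresponding top partial sum. -/
lemma subset_sum_le_S (v : Fin n → ℝ) (T : Finset (Fin n)) {q : ℕ}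
    (hT : T.card ≤ q) (hq : q ≤ n) : ∑ i ∈ T, |v i| ≤ S q v := by
  refine le_trans ?_ (S_mono T.card q hT v)
  set σ := sp v with hσ
  set K : Finset (Fin n) := T.image σ.symm with hK
  have hcard' : K.card = T.card := Finset.card_image_of_injective _ σ.symm.injective
  have h1 : ∑ i ∈ T, |v i| = ∑ j ∈ K, |v (σ j)| := by
    rw [hK, Finset.sum_image (fun a _ b _ h => σ.symm.injective h)]
    apply Finset.sum_congr rfl; intro i _; rw [Equiv.apply_symm_apply]
  rw [h1]
  set e := K.orderEmbOfFin hcard' with he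
  have himg : Finset.univ.image (fun k : Fin T.card => e k) = K := by
    apply Finset.eq_of_subset_of_card_le
    · intro a ha; simp only [Finset.mem_image] at ha
      obtain ⟨k, _, rfl⟩ := ha; exact Finset.orderEmbOfFin_mem K hcard' k
    · rw [Finset.card_image_of_injective _ e.injective, Finset.card_univ, Fintype.card_fin,
        hcard']
  have h2 : ∑ j ∈ K, |v (σ j)| = ∑ k : Fin T.card, |v (σ (e k))| := by
    rw [← himg, Finset.sum_image (fun a _ b _ h => e.injective h)]
  rw [h2]
  have h3 : ∀ k : Fin T.card, |v (σ (e k))| ≤ absKth v (k : ℕ) := by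
    intro k
    have hk : (k : ℕ) ≤ ((e k : Fin n) : ℕ) :=
      strictMono_le_apply (fun k => e k) (OrderEmbedding.strictMono e) k
    have h4 : absKth v ((e k : Fin n) : ℕ) ≤ absKth v (k : ℕ) := absKth_antitone v hk
    rw [absKth_eq v _ (e k).isLt] at h4
    simpa [Fin.eta] using h4
  calc ∑ k : Fin T.card, |v (σ (e k))| ≤ ∑ k : Fin T.card, absKth v (k : ℕ) :=
        Finset.sum_le_sum fun k _ => h3 k
    _ = S T.card v := by rw [S, Finset.sum_range fun k => absKth v k]

lemma S_add_le (q : ℕ) (hq : q ≤ n) (u v : Fin n → ℝ) :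
    S q (fun i => u i + v i) ≤ S q u + S q v := by
  rw [← sum_topSet q hq (fun i => u i + v i)]
  calc ∑ i ∈ topSet q hq (fun i => u i + v i), |u i + v i|
      ≤ ∑ i ∈ topSet q hq (fun i => u i + v i), (|u i| + |v i|) :=
        Finset.sum_le_sum fun i _ => abs_add_le _ _
    _ = (∑ i ∈ topSet q hq (fun i => u i + v i), |u i|)
        + ∑ i ∈ topSet q hq (fun i => u i + v i), |v i| := Finset.sum_add_distrib
    _ ≤ S q u + S q v := add_le_add
        (subset_sum_le_S u _ (le_of_eq (card_topSet q hq _)) hq)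
        (subset_sum_le_S v _ (le_of_eq (card_topSet q hq _)) hq)

lemma S_smul (q : ℕ) (hq : q ≤ n) (t : ℝ) (v : Fin n → ℝ) :
    S q (fun i => t * v i) = |t| * S q v := by
  apply le_antisymm
  · rw [← sum_topSet q hq (fun i => t * v i)]
    calc ∑ i ∈ topSet q hq (fun i => t * v i), |t * v i|
        = ∑ i ∈ topSet q hq (fun i => t * v i), |t| * |v i| := by
          apply Finset.sum_congr rfl; intro i _; rw [abs_mul]
      _ = |t| * ∑ i ∈ topSet q hq (fun i => t * v i), |v i| := by rw [Finset.mul_sum]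
      _ ≤ |t| * S q v := mul_le_mul_of_nonneg_left
          (subset_sum_le_S v _ (le_of_eq (card_topSet q hq _)) hq) (abs_nonneg t)
  · rw [← sum_topSet q hq v, Finset.mul_sum]
    calc ∑ i ∈ topSet q hq v, |t| * |v i|
        = ∑ i ∈ topSet q hq v, |t * v i| := by
          apply Finset.sum_congr rfl; intro i _; rw [abs_mul]
      _ ≤ S q (fun i => t * v i) := subset_sum_le_S (fun i => t * v i) _
          (le_of_eq (card_topSet q hq v)) hq

/-- Abel summation identity. -/
lemma abel_id (b c : ℕ → ℝ) (N : ℕ) :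
    ∑ k ∈ Finset.range N, b k * c k =
      (∑ q ∈ Finset.range N, (b q - b (q + 1)) * (∑ k ∈ Finset.range (q + 1), c k))
        + b N * ∑ k ∈ Finset.range N, c k := by
  induction N with
  | zero => simp
  | succ N ih =>
      rw [Finset.sum_range_succ, ih, Finset.sum_range_succ
        (fun q => (b q - b (q + 1)) * (∑ k ∈ Finset.range (q + 1), c k)),
        Finset.sum_range_succ c]
      ring

lemma abel_le (b c d : ℕ → ℝ) (N : ℕ)
    (hb : ∀ q, q < N → b (q + 1) ≤ b q) (hbN : b N = 0)
    (h : ∀ q, q < N → (∑ k ∈ Finset.range (q + 1), c k) ≤ ∑ k ∈ Finset.range (q + 1), d k) :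
    ∑ k ∈ Finset.range N, b k * c k ≤ ∑ k ∈ Finset.range N, b k * d k := by
  rw [abel_id b c N, abel_id b d N, hbN]
  simp only [zero_mul, add_zero]
  apply Finset.sum_le_sum
  intro q hq
  rw [Finset.mem_range] at hq
  exact mul_le_mul_of_nonneg_left (h q hq) (by linarith [hb q hq])

lemma abel_lt (b c d : ℕ → ℝ) (N : ℕ)
    (hb : ∀ q, q < N → b (q + 1) ≤ b q) (hbN : b N = 0)
    (h : ∀ q, q < N → (∑ k ∈ Finset.range (q + 1), c k) ≤ ∑ k ∈ Finset.range (q + 1), d k)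
    (hs : ∃ q, q < N ∧ b (q + 1) < b q ∧
      (∑ k ∈ Finset.range (q + 1), c k) < ∑ k ∈ Finset.range (q + 1), d k) :
    ∑ k ∈ Finset.range N, b k * c k < ∑ k ∈ Finset.range N, b k * d k := by
  rw [abel_id b c N, abel_id b d N, hbN]
  simp only [zero_mul, add_zero]
  obtain ⟨q0, hq0N, hq0b, hq0cd⟩ := hs
  apply Finset.sum_lt_sum
  · intro q hq
    rw [Finset.mem_range] at hq
    exact mul_le_mul_of_nonneg_left (h q hq) (by linarith [hb q hq])
  · exact ⟨q0, Finset.mem_range.mpr hq0N,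
      mul_lt_mul_of_pos_left hq0cd (by linarith)⟩

/-- If `a * t ≤ K * t ^ 2` for all small positive `t` then `a ≤ 0`. -/
lemma lin_le (a K : ℝ) (h : ∀ t : ℝ, 0 < t → t ≤ 1 → a * t ≤ K * t ^ 2) : a ≤ 0 := by
  by_contra hc
  push_neg at hc
  set t := min 1 (a / (2 * (|K| + 1))) with ht
  have hKpos : 0 < |K| + 1 := by positivity
  have htpos : 0 < t := lt_min one_pos (by positivity)
  have ht1 : t ≤ 1 := min_le_left _ _
  have h1 := h t htpos ht1
  have h2 : K * t ^ 2 ≤ |K| * t * t := by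
    have : K ≤ |K| := le_abs_self K
    nlinarith
  have h3 : |K| * t ≤ |K| * (a / (2 * (|K| + 1))) :=
    mul_le_mul_of_nonneg_left (min_le_right _ _) (abs_nonneg K)
  have h4 : |K| * (a / (2 * (|K| + 1))) < a / 2 := by
    have hlt : |K| < |K| + 1 := by linarith
    have := mul_lt_mul_of_pos_right hlt (show 0 < a / (2 * (|K| + 1)) by positivity)
    calc |K| * (a / (2 * (|K| + 1))) < (|K| + 1) * (a / (2 * (|K| + 1))) := this
      _ = a / 2 := by field_simp
  nlinarith

end SlopeAux
namespace SlopeAux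

variable {n : ℕ}

/-- truncated weights -/
noncomputable def wt (w : ℕ → ℝ) (n : ℕ) : ℕ → ℝ := fun k => if k < n then w k else 0

lemma slope_eq_wt (w : ℕ → ℝ) (x : Fin n → ℝ) :
    slopeNorm w x = ∑ k ∈ Finset.range n, wt w n k * absKth x k := by
  apply Finset.sum_congr rfl
  intro k hk
  rw [Finset.mem_range] at hk
  rw [wt, if_pos hk]

lemma wt_antitone (w : ℕ → ℝ) (hwa : ∀ i j : ℕ, i ≤ j → j < n → w j ≤ w i)
    (hwn : 0 ≤ w (n - 1)) : ∀ q, q < n → wt w n (q + 1) ≤ wt w n q := by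
  intro q hq
  rw [wt, wt, if_pos hq]
  by_cases h : q + 1 < n
  · rw [if_pos h]; exact hwa q (q + 1) (Nat.le_succ q) h
  · rw [if_neg h]
    have : q = n - 1 := by omega
    rw [this]; exact hwn

lemma wt_nonneg (w : ℕ → ℝ) (hwa : ∀ i j : ℕ, i ≤ j → j < n → w j ≤ w i)
    (hwn : 0 ≤ w (n - 1)) : ∀ k, 0 ≤ wt w n k := by
  intro k
  rw [wt]
  by_cases h : k < n
  · rw [if_pos h]
    calc (0:ℝ) ≤ w (n - 1) := hwn
      _ ≤ w k := hwa k (n - 1) (by omega) (by omega)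
  · rw [if_neg h]

lemma slope_abel (w : ℕ → ℝ) (x : Fin n → ℝ) :
    slopeNorm w x = ∑ q ∈ Finset.range n,
      (wt w n q - wt w n (q + 1)) * S (q + 1) x := by
  rw [slope_eq_wt, abel_id (wt w n) (absKth x) n]
  have h1 : wt w n n = 0 := by rw [wt, if_neg (lt_irrefl n)]
  rw [h1, zero_mul, add_zero]
  rfl

lemma slope_add_le (w : ℕ → ℝ) (hwa : ∀ i j : ℕ, i ≤ j → j < n → w j ≤ w i)
    (hwn : 0 ≤ w (n - 1)) (x z : Fin n → ℝ) :
    slopeNorm w (fun i => x i + z i) ≤ slopeNorm w x + slopeNorm w z := by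
  rw [slope_abel w (fun i => x i + z i), slope_abel w x, slope_abel w z,
    ← Finset.sum_add_distrib]
  apply Finset.sum_le_sum
  intro q hq
  rw [Finset.mem_range] at hq
  rw [← mul_add]
  apply mul_le_mul_of_nonneg_left (S_add_le (q + 1) (by omega) x z)
  have := wt_antitone w hwa hwn q hq
  linarith

lemma slope_smul (w : ℕ → ℝ) (t : ℝ) (x : Fin n → ℝ) :
    slopeNorm w (fun i => t * x i) = |t| * slopeNorm w x := by
  rw [slope_abel w (fun i => t * x i), slope_abel w x, Finset.mul_sum]
  apply Finset.sum_congr rfl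
  intro q hq
  rw [Finset.mem_range] at hq
  rw [S_smul (q + 1) (by omega) t x]
  ring

/-- The index-wise rearranged pairing sum. -/
noncomputable def cg (g x : Fin n → ℝ) : ℕ → ℝ :=
  fun k => if h : k < n then |g (sp x ⟨k, h⟩)| else 0

lemma sum_abs_mul_eq (g x : Fin n → ℝ) :
    ∑ i, |g i| * |x i| = ∑ k ∈ Finset.range n, absKth x k * cg g x k := by
  rw [Finset.sum_range (fun k => absKth x k * cg g x k)]
  rw [← Equiv.sum_comp (sp x) (fun i => |g i| * |x i|)]
  apply Finset.sum_congr rfl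
  intro k _
  rw [cg, dif_pos k.isLt, absKth_eq x k k.isLt, Fin.eta]
  ring

lemma cg_partial_le (g x : Fin n → ℝ) (q : ℕ) (hq : q + 1 ≤ n) :
    ∑ k ∈ Finset.range (q + 1), cg g x k ≤ S (q + 1) g := by
  have h1 : ∑ k ∈ Finset.range (q + 1), cg g x k
      = ∑ i ∈ topSet (q + 1) hq x, |g i| := by
    rw [sum_topSet_gen (q + 1) hq x (fun i => |g i|)]
    rfl
  rw [h1]
  exact subset_sum_le_S g _ (le_of_eq (card_topSet (q + 1) hq x)) hq

/-- Nonstrict pairing bound: `⟨g, x⟩ ≤ λ J(x)` from dual feasibility of `g`. -/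
lemma pairing (w : ℕ → ℝ) (hwa : ∀ i j : ℕ, i ≤ j → j < n → w j ≤ w i)
    (hwn : 0 ≤ w (n - 1)) (lam : ℝ) (hlam : 0 < lam) (g x : Fin n → ℝ)
    (hg : ∀ q, q < n → S (q + 1) g ≤ lam * ∑ k ∈ Finset.range (q + 1), w k) :
    ∑ i, g i * x i ≤ lam * slopeNorm w x := by
  have h1 : ∑ i, g i * x i ≤ ∑ i, |g i| * |x i| := by
    apply Finset.sum_le_sum
    intro i _
    calc g i * x i ≤ |g i * x i| := le_abs_self _
      _ = |g i| * |x i| := abs_mul _ _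
  have h2 : ∑ k ∈ Finset.range n, absKth x k * cg g x k ≤
      ∑ k ∈ Finset.range n, absKth x k * (lam * wt w n k) := by
    apply abel_le
    · intro q _; exact absKth_antitone x (Nat.le_succ q)
    · exact absKth_zero_of_ge x (le_refl n)
    · intro q hqn
      refine le_trans (cg_partial_le g x q (by omega)) (le_trans (hg q hqn) ?_)
      rw [Finset.mul_sum]
      apply Finset.sum_le_sum
      intro k hk
      rw [Finset.mem_range] at hk
      rw [wt, if_pos (by omega : k < n)]
  have h3 : ∑ k ∈ Finset.range n, absKth x k * (lam * wt w n k)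
      = lam * slopeNorm w x := by
    rw [slope_eq_wt, Finset.mul_sum]
    apply Finset.sum_congr rfl
    intro k _; ring
  calc ∑ i, g i * x i ≤ ∑ i, |g i| * |x i| := h1
    _ = ∑ k ∈ Finset.range n, absKth x k * cg g x k := sum_abs_mul_eq g x
    _ ≤ _ := h2
    _ = lam * slopeNorm w x := h3

end SlopeAux
namespace SlopeAux

variable {n : ℕ}

/-- The embedding `Fin (n-1) → Fin n` skipping `ℓ`. -/
def dropEmb (ℓ : Fin n) : Fin (n - 1) → Fin n :=
  fun j => if h : (j : ℕ) < (ℓ : ℕ) then ⟨j, lt_trans h ℓ.isLt⟩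
           else ⟨(j : ℕ) + 1, by have := j.isLt; omega⟩

lemma dropIdx_eq (ℓ : Fin n) (v : Fin n → ℝ) (j : Fin (n - 1)) :
    dropIdx ℓ v j = v (dropEmb ℓ j) := by
  rw [dropIdx, dropEmb]
  by_cases h : (j : ℕ) < (ℓ : ℕ)
  · rw [dif_pos h, dif_pos h]
  · rw [dif_neg h, dif_neg h]

lemma dropEmb_injective (ℓ : Fin n) : Function.Injective (dropEmb ℓ) := by
  intro a b hab
  rw [dropEmb, dropEmb] at hab
  apply Fin.ext
  by_cases ha : (a : ℕ) < (ℓ : ℕ) <;> by_cases hb : (b : ℕ) < (ℓ : ℕ) <;>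
    [rw [dif_pos ha, dif_pos hb] at hab; rw [dif_pos ha, dif_neg hb] at hab;
     rw [dif_neg ha, dif_pos hb] at hab; rw [dif_neg ha, dif_neg hb] at hab] <;>
    (have := Fin.mk.injEq _ _ _ _ ▸ hab; simp only [Fin.mk.injEq] at hab; omega)

lemma dropEmb_ne (ℓ : Fin n) (j : Fin (n - 1)) : dropEmb ℓ j ≠ ℓ := by
  rw [dropEmb]
  by_cases h : (j : ℕ) < (ℓ : ℕ)
  · rw [dif_pos h]; intro hc; rw [Fin.ext_iff] at hc; simp at hc; omega
  · rw [dif_neg h]; intro hc; rw [Fin.ext_iff] at hc; simp at hc; omega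

lemma dropEmb_surj (ℓ : Fin n) (i : Fin n) (hi : i ≠ ℓ) :
    ∃ j : Fin (n - 1), dropEmb ℓ j = i := by
  have hℓ : (ℓ : ℕ) < n := ℓ.isLt
  have hin : (i : ℕ) < n := i.isLt
  have hne : (i : ℕ) ≠ (ℓ : ℕ) := fun h => hi (Fin.ext h)
  by_cases h : (i : ℕ) < (ℓ : ℕ)
  · refine ⟨⟨i, by omega⟩, ?_⟩
    rw [dropEmb, dif_pos (by simpa using h)]
  · refine ⟨⟨(i : ℕ) - 1, by omega⟩, ?_⟩
    rw [dropEmb, dif_neg (by simp; omega)]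
    apply Fin.ext; simp; omega

/-- Subset sums avoiding `ℓ` are controlled by partial sums of the dropped vector. -/
lemma subset_sum_le_S_drop (g : Fin n → ℝ) (ℓ : Fin n) (T : Finset (Fin n))
    (hlT : ℓ ∉ T) {q : ℕ} (hT : T.card ≤ q) (hq : q ≤ n - 1) :
    ∑ i ∈ T, |g i| ≤ S q (dropIdx ℓ g) := by
  set K : Finset (Fin (n - 1)) := Finset.univ.filter (fun j => dropEmb ℓ j ∈ T) with hK
  have hsum : ∑ j ∈ K, |dropIdx ℓ g j| = ∑ i ∈ T, |g i| := by
    apply Finset.sum_bij (fun (j : Fin (n - 1)) _ => dropEmb ℓ j)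
    · intro a ha; exact (Finset.mem_filter.mp ha).2
    · intro a _ b _ h; exact dropEmb_injective ℓ h
    · intro i hiT
      obtain ⟨j, hj⟩ := dropEmb_surj ℓ i (fun h => hlT (h ▸ hiT))
      exact ⟨j, Finset.mem_filter.mpr ⟨Finset.mem_univ j, hj ▸ hiT⟩, hj⟩
    · intro a _; rw [dropIdx_eq]
  have hcard : K.card = T.card := by
    apply Finset.card_bij (fun (j : Fin (n - 1)) _ => dropEmb ℓ j)
    · intro a ha; exact (Finset.mem_filter.mp ha).2
    · intro a _ b _ h; exact dropEmb_injective ℓ h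
    · intro i hiT
      obtain ⟨j, hj⟩ := dropEmb_surj ℓ i (fun h => hlT (h ▸ hiT))
      exact ⟨j, Finset.mem_filter.mpr ⟨Finset.mem_univ j, hj ▸ hiT⟩, hj⟩
  rw [← hsum]
  exact subset_sum_le_S (dropIdx ℓ g) K (by omega) hq

/-- Strict pairing bound under the screening condition. -/
lemma pairing_strict (hn : 0 < n) (w : ℕ → ℝ) (lam : ℝ)
    (g x : Fin n → ℝ) (ℓ : Fin n) (hxl : x ℓ ≠ 0)
    (hg : ∀ q, q < n → S (q + 1) g ≤ lam * ∑ k ∈ Finset.range (q + 1), w k)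
    (hscr' : ∀ q, q < n →
      |g ℓ| + S q (dropIdx ℓ g) < lam * ∑ k ∈ Finset.range (q + 1), w k) :
    ∑ i, g i * x i < lam * slopeNorm w x := by
  set τ := sp x with hτ
  set p : ℕ := ((τ.symm ℓ : Fin n) : ℕ) with hp
  have hpn : p < n := (τ.symm ℓ).isLt
  have hbp : absKth x p = |x ℓ| := by
    rw [absKth_eq x p hpn]
    have he : sp x ⟨p, hpn⟩ = ℓ := by
      show τ ⟨p, hpn⟩ = ℓ
      have h1 : (⟨p, hpn⟩ : Fin n) = τ.symm ℓ := Fin.eta _ _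
      rw [h1, Equiv.apply_symm_apply]
    rw [he]
  have hbppos : 0 < absKth x p := by rw [hbp]; exact abs_pos.mpr hxl
  -- find a strict drop of absKth x at or after p
  have hqex : ∃ q, p ≤ q ∧ q < n ∧ absKth x (q + 1) < absKth x q := by
    by_contra hc
    push_neg at hc
    have hconst : ∀ j, p ≤ j → j ≤ n → absKth x j = absKth x p := by
      intro j hj hjn
      induction j, hj using Nat.le_induction with
      | base => rfl
      | succ j hpj ih =>
          have hjn' : j < n := by omega
          have h1 := hc j hpj hjn'
          have h2 := absKth_antitone x (Nat.le_succ j)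
          have : absKth x (j + 1) = absKth x j := le_antisymm h2 h1
          rw [this]; exact ih (by omega)
    have := hconst n (by omega) (le_refl n)
    rw [absKth_zero_of_ge x (le_refl n)] at this
    linarith
  obtain ⟨q0, hpq0, hq0n, hq0s⟩ := hqex
  -- strict partial-sum bound at q0
  have hstrict : ∑ k ∈ Finset.range (q0 + 1), cg g x k
      < lam * ∑ k ∈ Finset.range (q0 + 1), w k := by
    have hq01 : q0 + 1 ≤ n := by omega
    have h1 : ∑ k ∈ Finset.range (q0 + 1), cg g x k
        = ∑ i ∈ topSet (q0 + 1) hq01 x, |g i| := by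
      rw [sum_topSet_gen (q0 + 1) hq01 x (fun i => |g i|)]
      rfl
    have hl_mem : ℓ ∈ topSet (q0 + 1) hq01 x := by
      rw [topSet]
      apply Finset.mem_image.mpr
      refine ⟨⟨p, hpn⟩, (Finset.mem_attachFin _).mpr (by simp; omega), ?_⟩
      show τ ⟨p, hpn⟩ = ℓ
      have : (⟨p, hpn⟩ : Fin n) = τ.symm ℓ := Fin.eta _ _
      rw [this, Equiv.apply_symm_apply]
    have h2 : ∑ i ∈ topSet (q0 + 1) hq01 x, |g i|
        = |g ℓ| + ∑ i ∈ (topSet (q0 + 1) hq01 x).erase ℓ, |g i| :=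
      (Finset.add_sum_erase _ _ hl_mem).symm
    have h3 : ∑ i ∈ (topSet (q0 + 1) hq01 x).erase ℓ, |g i| ≤ S q0 (dropIdx ℓ g) := by
      apply subset_sum_le_S_drop g ℓ _ (Finset.notMem_erase ℓ _)
      · rw [Finset.card_erase_of_mem hl_mem, card_topSet]; omega
      · omega
    calc ∑ k ∈ Finset.range (q0 + 1), cg g x k
        = |g ℓ| + ∑ i ∈ (topSet (q0 + 1) hq01 x).erase ℓ, |g i| := by rw [h1, h2]
      _ ≤ |g ℓ| + S q0 (dropIdx ℓ g) := by linarith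
      _ < lam * ∑ k ∈ Finset.range (q0 + 1), w k := hscr' q0 hq0n
  -- Abel comparison, strict
  have h2 : ∑ k ∈ Finset.range n, absKth x k * cg g x k <
      ∑ k ∈ Finset.range n, absKth x k * (lam * wt w n k) := by
    apply abel_lt
    · intro q _; exact absKth_antitone x (Nat.le_succ q)
    · exact absKth_zero_of_ge x (le_refl n)
    · intro q hqn
      refine le_trans (cg_partial_le g x q (by omega)) (le_trans (hg q hqn) ?_)
      rw [Finset.mul_sum]
      apply Finset.sum_le_sum
      intro k hk
      rw [Finset.mem_range] at hk
      rw [wt, if_pos (by omega : k < n)]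
    · refine ⟨q0, hq0n, hq0s, ?_⟩
      refine lt_of_lt_of_le hstrict ?_
      rw [Finset.mul_sum]
      apply Finset.sum_le_sum
      intro k hk
      rw [Finset.mem_range] at hk
      rw [wt, if_pos (by omega : k < n)]
  have h3 : ∑ k ∈ Finset.range n, absKth x k * (lam * wt w n k)
      = lam * slopeNorm w x := by
    rw [slope_eq_wt, Finset.mul_sum]
    apply Finset.sum_congr rfl
    intro k _; ring
  have h1 : ∑ i, g i * x i ≤ ∑ i, |g i| * |x i| := by
    apply Finset.sum_le_sum
    intro i _
    calc g i * x i ≤ |g i * x i| := le_abs_self _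
      _ = |g i| * |x i| := abs_mul _ _
  calc ∑ i, g i * x i ≤ ∑ i, |g i| * |x i| := h1
    _ = ∑ k ∈ Finset.range n, absKth x k * cg g x k := sum_abs_mul_eq g x
    _ < ∑ k ∈ Finset.range n, absKth x k * (lam * wt w n k) := h2
    _ = lam * slopeNorm w x := h3

end SlopeAux
namespace SlopeAux

lemma dot_swap {m n : ℕ} (A : Matrix (Fin m) (Fin n) ℝ) (u : Fin m → ℝ) (x : Fin n → ℝ) :
    ∑ i, u i * (A *ᵥ x) i = ∑ j, (Aᵀ *ᵥ u) j * x j := by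
  simp only [Matrix.mulVec, dotProduct, Matrix.transpose_apply, Finset.mul_sum,
    Finset.sum_mul]
  rw [Finset.sum_comm]
  apply Finset.sum_congr rfl; intro j _
  apply Finset.sum_congr rfl; intro i _
  ring

lemma mulVec_comb {m n : ℕ} (A : Matrix (Fin m) (Fin n) ℝ) (x h : Fin n → ℝ) (c : ℝ)
    (i : Fin m) :
    (A *ᵥ (fun j => x j + c * h j)) i = (A *ᵥ x) i + c * (A *ᵥ h) i := by
  simp only [Matrix.mulVec, dotProduct, Finset.mul_sum]
  rw [← Finset.sum_add_distrib]
  apply Finset.sum_congr rfl; intro j _; ring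

lemma sum_sq_comb {m : ℕ} (a b : Fin m → ℝ) (t : ℝ) :
    ∑ i, (a i - t * b i) ^ 2 =
      ∑ i, (a i) ^ 2 - 2 * t * (∑ i, a i * b i) + t ^ 2 * ∑ i, (b i) ^ 2 := by
  have h : ∀ i : Fin m, (a i - t * b i) ^ 2
      = ((a i) ^ 2 - 2 * t * (a i * b i)) + t ^ 2 * (b i) ^ 2 := fun i => by ring
  have e := Finset.sum_congr rfl (fun i (_ : i ∈ Finset.univ) => h i)
  rw [e]
  simp only [Finset.sum_add_distrib, Finset.sum_sub_distrib, ← Finset.mul_sum]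

lemma sum_sq_three {m : ℕ} (a b c : Fin m → ℝ) :
    ∑ i, (a i + b i - c i) ^ 2 =
      ∑ i, (a i) ^ 2 + ∑ i, (b i) ^ 2 + ∑ i, (c i) ^ 2 + 2 * (∑ i, a i * b i)
        - 2 * (∑ i, a i * c i) - 2 * (∑ i, b i * c i) := by
  have h : ∀ i : Fin m, (a i + b i - c i) ^ 2
      = ((((a i) ^ 2 + (b i) ^ 2) + (c i) ^ 2) + 2 * (a i * b i))
        - 2 * (a i * c i) - 2 * (b i * c i) := fun i => by ring
  have e := Finset.sum_congr rfl (fun i (_ : i ∈ Finset.univ) => h i)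
  rw [e]
  simp only [Finset.sum_add_distrib, Finset.sum_sub_distrib, ← Finset.mul_sum]

end SlopeAux
open SlopeAux

theorem slope_safe_screening {m n : ℕ} (hn : 0 < n)
    (A : Matrix (Fin m) (Fin n) ℝ) (y : Fin m → ℝ)
    (w : ℕ → ℝ) (hw0 : 0 < w 0)
    (hwa : ∀ i j : ℕ, i ≤ j → j < n → w j ≤ w i) (hwn : 0 ≤ w (n - 1))
    (lam : ℝ) (hlam : 0 < lam)
    (ustar : Fin m → ℝ)
    (hfeas : ∀ q < n, ∑ k ∈ Finset.range (q + 1), absKth (Aᵀ *ᵥ ustar) k ≤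
        lam * ∑ k ∈ Finset.range (q + 1), w k)
    (hdualopt : ∀ u : Fin m → ℝ,
      (∀ q < n, ∑ k ∈ Finset.range (q + 1), absKth (Aᵀ *ᵥ u) k ≤
          lam * ∑ k ∈ Finset.range (q + 1), w k) →
      (1 / 2) * ∑ i, (y i) ^ 2 - (1 / 2) * ∑ i, (y i - u i) ^ 2 ≤
      (1 / 2) * ∑ i, (y i) ^ 2 - (1 / 2) * ∑ i, (y i - ustar i) ^ 2)
    (xstar : Fin n → ℝ)
    (hmin : ∀ x : Fin n → ℝ,
        (1 / 2) * ∑ i, (y i - (A *ᵥ xstar) i) ^ 2 + lam * slopeNorm w xstar ≤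
        (1 / 2) * ∑ i, (y i - (A *ᵥ x) i) ^ 2 + lam * slopeNorm w x)
    (ℓ : Fin n)
    (hscr : ∀ q < n, |∑ i, A i ℓ * ustar i| +
        ∑ k ∈ Finset.range q, absKth (dropIdx ℓ (fun j => ∑ i, A i j * ustar i)) k <
        lam * ∑ k ∈ Finset.range (q + 1), w k) :
    xstar ℓ = 0 := by
  classical
  -- the primal-induced dual point
  obtain ⟨u0, hu0i⟩ : ∃ u0 : Fin m → ℝ, ∀ i, u0 i = y i - (A *ᵥ xstar) i :=
    ⟨_, fun i => rfl⟩
  have hyi : ∀ i, y i = u0 i + (A *ᵥ xstar) i := fun i => by rw [hu0i i]; ring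
  -- Step C : scaling optimality
  have hJP : lam * slopeNorm w xstar = ∑ i, u0 i * (A *ᵥ xstar) i := by
    have hy0 : ∑ i, (y i - (A *ᵥ xstar) i) ^ 2 = ∑ i, (u0 i) ^ 2 := by
      apply Finset.sum_congr rfl; intro i _; rw [hu0i i]
    have scale : ∀ c : ℝ, 0 ≤ 1 + c →
        ∑ i, (y i - (A *ᵥ (fun j => xstar j + c * xstar j)) i) ^ 2
            = ∑ i, (u0 i) ^ 2 - 2 * c * (∑ i, u0 i * (A *ᵥ xstar) i)
              + c ^ 2 * ∑ i, ((A *ᵥ xstar) i) ^ 2 ∧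
        slopeNorm w (fun j => xstar j + c * xstar j) = (1 + c) * slopeNorm w xstar := by
      intro c hc
      constructor
      · have e2 : ∑ i, (y i - (A *ᵥ (fun j => xstar j + c * xstar j)) i) ^ 2
            = ∑ i, (u0 i - c * (A *ᵥ xstar) i) ^ 2 := by
          apply Finset.sum_congr rfl; intro i _
          rw [mulVec_comb A xstar xstar c i, hu0i i]; ring_nf
        rw [e2]; exact sum_sq_comb u0 (A *ᵥ xstar) c
      · have e : (fun j => xstar j + c * xstar j) = (fun j => (1 + c) * xstar j) :=
          funext fun j => by ring
        rw [e, slope_smul, abs_of_nonneg hc]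
    have hup : (∑ i, u0 i * (A *ᵥ xstar) i) - lam * slopeNorm w xstar ≤ 0 := by
      apply lin_le _ ((1 / 2) * ∑ i, ((A *ᵥ xstar) i) ^ 2)
      intro t ht0 ht1
      have hm := hmin (fun j => xstar j + t * xstar j)
      obtain ⟨h1, h3⟩ := scale t (by linarith)
      rw [h1, h3, hy0] at hm
      nlinarith [hm]
    have hdown : lam * slopeNorm w xstar - (∑ i, u0 i * (A *ᵥ xstar) i) ≤ 0 := by
      apply lin_le _ ((1 / 2) * ∑ i, ((A *ᵥ xstar) i) ^ 2)
      intro t ht0 ht1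
      have hm := hmin (fun j => xstar j + (-t) * xstar j)
      obtain ⟨h1, h3⟩ := scale (-t) (by linarith)
      rw [h1, h3, hy0] at hm
      nlinarith [hm]
    linarith
  -- Step D : dual feasibility of u0
  have hfeas0 : ∀ q, q < n → S (q + 1) (Aᵀ *ᵥ u0) ≤
      lam * ∑ k ∈ Finset.range (q + 1), w k := by
    intro q hq
    have hq1 : q + 1 ≤ n := by omega
    set g0 := Aᵀ *ᵥ u0 with hg0
    set T := topSet (q + 1) hq1 g0 with hT
    obtain ⟨hvec, hhv⟩ : ∃ h : Fin n → ℝ,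
        ∀ i, h i = if i ∈ T then (if g0 i < 0 then (-1 : ℝ) else 1) else 0 :=
      ⟨_, fun _ => rfl⟩
    have hdot : ∑ j, g0 j * hvec j = S (q + 1) g0 := by
      rw [← sum_topSet (q + 1) hq1 g0]
      have h1 : ∑ j, g0 j * hvec j = ∑ j ∈ T, g0 j * hvec j := by
        symm
        apply Finset.sum_subset (Finset.subset_univ T)
        intro i _ hiT
        rw [hhv i, if_neg hiT, mul_zero]
      rw [h1]
      apply Finset.sum_congr rfl
      intro i hiT
      rw [hhv i, if_pos hiT]
      by_cases hgi : g0 i < 0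
      · rw [if_pos hgi, abs_of_neg hgi]; ring
      · rw [if_neg hgi, abs_of_nonneg (not_lt.mp hgi)]; ring
    have habs : ∀ i, |hvec i| = if i ∈ T then (1 : ℝ) else 0 := by
      intro i; rw [hhv i]
      by_cases hiT : i ∈ T
      · rw [if_pos hiT, if_pos hiT]
        by_cases hgi : g0 i < 0
        · rw [if_pos hgi]; norm_num
        · rw [if_neg hgi]; norm_num
      · rw [if_neg hiT, if_neg hiT, abs_zero]
    have hJh : slopeNorm w hvec ≤ ∑ k ∈ Finset.range (q + 1), w k := by
      have hcount : ∀ a b : ℕ,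
          ∑ k ∈ Finset.range a, (if k < b then (1 : ℝ) else 0) = ((min a b : ℕ) : ℝ) := by
        intro a b
        rw [Finset.sum_boole]
        congr 1
        have e : (Finset.range a).filter (fun k => k < b) = Finset.range (min a b) := by
          ext k; simp only [Finset.mem_filter, Finset.mem_range]; omega
        rw [e, Finset.card_range]
      have hS : ∀ q', q' < n → S (q' + 1) hvec ≤
          ∑ k ∈ Finset.range (q' + 1), (if k < q + 1 then (1 : ℝ) else 0) := by
        intro q' hq'
        have hq'1 : q' + 1 ≤ n := by omega
        rw [hcount (q' + 1) (q + 1), ← sum_topSet (q' + 1) hq'1 hvec]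
        calc ∑ i ∈ topSet (q' + 1) hq'1 hvec, |hvec i|
            = ∑ i ∈ topSet (q' + 1) hq'1 hvec, (if i ∈ T then (1 : ℝ) else 0) :=
              Finset.sum_congr rfl (fun i _ => habs i)
          _ = ((topSet (q' + 1) hq'1 hvec ∩ T).card : ℝ) := by
              rw [Finset.sum_ite_mem]; simp
          _ ≤ ((min (q' + 1) (q + 1) : ℕ) : ℝ) := by
              have h1 : (topSet (q' + 1) hq'1 hvec ∩ T).card ≤ min (q' + 1) (q + 1) := by
                apply le_min
                · calc (topSet (q' + 1) hq'1 hvec ∩ T).card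
                      ≤ (topSet (q' + 1) hq'1 hvec).card :=
                        Finset.card_le_card Finset.inter_subset_left
                    _ = q' + 1 := card_topSet _ _ _
                · calc (topSet (q' + 1) hq'1 hvec ∩ T).card ≤ T.card :=
                        Finset.card_le_card Finset.inter_subset_right
                    _ = q + 1 := by rw [hT]; exact card_topSet _ _ _
              exact_mod_cast h1
      have hcomp : ∑ k ∈ Finset.range n, wt w n k * absKth hvec k ≤
          ∑ k ∈ Finset.range n, wt w n k * (if k < q + 1 then (1 : ℝ) else 0) := by
        apply abel_le
        · exact wt_antitone w hwa hwn
        · simp [wt]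
        · intro q' hq'; exact hS q' hq'
      have hright : ∑ k ∈ Finset.range n, wt w n k * (if k < q + 1 then (1 : ℝ) else 0)
          = ∑ k ∈ Finset.range (q + 1), w k := by
        have e1 : ∀ k, wt w n k * (if k < q + 1 then (1 : ℝ) else 0)
            = if k < q + 1 then wt w n k else 0 := by
          intro k; by_cases h : k < q + 1 <;> simp [h]
        rw [Finset.sum_congr rfl (fun k _ => e1 k), ← Finset.sum_filter]
        have e2 : (Finset.range n).filter (fun k => k < q + 1) = Finset.range (q + 1) := by
          ext k; simp only [Finset.mem_filter, Finset.mem_range]; omega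
        rw [e2]
        apply Finset.sum_congr rfl
        intro k hk
        rw [Finset.mem_range] at hk
        rw [wt, if_pos (by omega : k < n)]
      calc slopeNorm w hvec = ∑ k ∈ Finset.range n, wt w n k * absKth hvec k :=
            slope_eq_wt w hvec
        _ ≤ _ := hcomp
        _ = ∑ k ∈ Finset.range (q + 1), w k := hright
    have hsub : ∑ j, g0 j * hvec j ≤ lam * slopeNorm w hvec := by
      have hdsw : ∑ i, u0 i * (A *ᵥ hvec) i = ∑ j, g0 j * hvec j := dot_swap A u0 hvec
      have hy0 : ∑ i, (y i - (A *ᵥ xstar) i) ^ 2 = ∑ i, (u0 i) ^ 2 :=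
        Finset.sum_congr rfl (fun i _ => by rw [hu0i i])
      have hkey : (∑ j, g0 j * hvec j) - lam * slopeNorm w hvec ≤ 0 := by
        apply lin_le _ ((1 / 2) * ∑ i, ((A *ᵥ hvec) i) ^ 2)
        intro t ht0 ht1
        have hm := hmin (fun j => xstar j + t * hvec j)
        have h1 : ∑ i, (y i - (A *ᵥ (fun j => xstar j + t * hvec j)) i) ^ 2
            = ∑ i, (u0 i) ^ 2 - 2 * t * (∑ i, u0 i * (A *ᵥ hvec) i)
              + t ^ 2 * ∑ i, ((A *ᵥ hvec) i) ^ 2 := by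
          have e2 : ∑ i, (y i - (A *ᵥ (fun j => xstar j + t * hvec j)) i) ^ 2
              = ∑ i, (u0 i - t * (A *ᵥ hvec) i) ^ 2 := by
            apply Finset.sum_congr rfl; intro i _
            rw [mulVec_comb A xstar hvec t i, hu0i i]; ring_nf
          rw [e2]; exact sum_sq_comb u0 (A *ᵥ hvec) t
        have h3 : slopeNorm w (fun j => xstar j + t * hvec j) ≤
            slopeNorm w xstar + t * slopeNorm w hvec := by
          calc slopeNorm w (fun j => xstar j + t * hvec j)
              ≤ slopeNorm w xstar + slopeNorm w (fun j => t * hvec j) :=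
                slope_add_le w hwa hwn xstar (fun j => t * hvec j)
            _ = slopeNorm w xstar + t * slopeNorm w hvec := by
                rw [slope_smul, abs_of_pos ht0]
        rw [h1, hy0, hdsw] at hm
        nlinarith [hm, mul_le_mul_of_nonneg_left h3 (le_of_lt hlam)]
      linarith
    calc S (q + 1) g0 = ∑ j, g0 j * hvec j := hdot.symm
      _ ≤ lam * slopeNorm w hvec := hsub
      _ ≤ lam * ∑ k ∈ Finset.range (q + 1), w k :=
          mul_le_mul_of_nonneg_left hJh (le_of_lt hlam)
  -- Step E : u0 = ustar
  have huEq : ∀ i, u0 i = ustar i := by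
    have hD := hdualopt u0 (fun q' hq' => hfeas0 q' hq')
    have e1 : ∑ i, (y i - u0 i) ^ 2 = ∑ i, ((A *ᵥ xstar) i) ^ 2 := by
      apply Finset.sum_congr rfl; intro i _
      rw [hu0i i]; ring_nf
    have e2 : ∑ i, (y i - ustar i) ^ 2
        = ∑ i, (u0 i + (A *ᵥ xstar) i - ustar i) ^ 2 := by
      apply Finset.sum_congr rfl; intro i _; rw [hyi i]
    rw [e1, e2, sum_sq_three u0 (A *ᵥ xstar) ustar] at hD
    have e4 : ∑ i, (u0 i - ustar i) ^ 2 = ∑ i, (u0 i) ^ 2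
        - 2 * 1 * (∑ i, u0 i * ustar i) + 1 ^ 2 * ∑ i, (ustar i) ^ 2 := by
      calc ∑ i, (u0 i - ustar i) ^ 2 = ∑ i, (u0 i - 1 * ustar i) ^ 2 := by
            apply Finset.sum_congr rfl; intro i _; ring_nf
        _ = _ := sum_sq_comb u0 ustar 1
    have hP1 : ∑ j, (Aᵀ *ᵥ ustar) j * xstar j ≤ lam * slopeNorm w xstar :=
      pairing w hwa hwn lam hlam (Aᵀ *ᵥ ustar) xstar (fun q' hq' => hfeas q' hq')
    have hQ2 : ∑ i, ustar i * (A *ᵥ xstar) i = ∑ j, (Aᵀ *ᵥ ustar) j * xstar j :=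
      dot_swap A ustar xstar
    have e5 : ∑ i, (A *ᵥ xstar) i * ustar i = ∑ i, ustar i * (A *ᵥ xstar) i := by
      apply Finset.sum_congr rfl; intro i _; ring
    have hE : ∑ i, (u0 i - ustar i) ^ 2 ≤ 0 := by
      rw [e4]
      linarith [hD, hJP, hP1, hQ2, e5]
    intro i
    have hnn : ∀ j ∈ (Finset.univ : Finset (Fin m)), (0 : ℝ) ≤ (u0 j - ustar j) ^ 2 :=
      fun j _ => sq_nonneg _
    have hz := (Finset.sum_eq_zero_iff_of_nonneg hnn).mp
      (le_antisymm hE (Finset.sum_nonneg hnn)) i (Finset.mem_univ i)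
    have := sq_eq_zero_iff.mp hz
    linarith [this]
  -- Step F : conclusion
  by_contra hxl
  have hstrict : ∑ j, (Aᵀ *ᵥ ustar) j * xstar j < lam * slopeNorm w xstar := by
    have hgl : (Aᵀ *ᵥ ustar) ℓ = ∑ i, A i ℓ * ustar i := by
      simp [Matrix.mulVec, dotProduct, Matrix.transpose_apply]
    have hfun : (fun j => ∑ i, A i j * ustar i) = (Aᵀ *ᵥ ustar) := by
      funext j; simp [Matrix.mulVec, dotProduct, Matrix.transpose_apply]
    have hscr'' : ∀ q', q' < n → |(Aᵀ *ᵥ ustar) ℓ| + S q' (dropIdx ℓ (Aᵀ *ᵥ ustar)) <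
        lam * ∑ k ∈ Finset.range (q' + 1), w k := by
      intro q' hq'
      have h := hscr q' hq'
      rw [hfun] at h
      rw [hgl]
      exact h
    exact pairing_strict hn w lam (Aᵀ *ᵥ ustar) xstar ℓ hxl
      (fun q' hq' => hfeas q' hq') hscr''
  have heq : ∑ j, (Aᵀ *ᵥ ustar) j * xstar j = lam * slopeNorm w xstar := by
    have h1 : u0 = ustar := funext huEq
    rw [← h1, ← dot_swap A u0 xstar, hJP]
  rw [heq] at hstrict
  exact lt_irrefl _ hstrict
end

section
/- Let u* ∈ B(c, R) = { u : ‖u − c‖₂ ≤ R } and suppose u* is feasible for the SLOPE dual, i.e., Σ_{k=1}^{q}|Aᵀu*|_{[k]} ≤ λ Σ_{k=1}^{q} w_k for all q. Then for all ℓ, q ∈ {1,...,n} and all r ∈ {1,...,q}: |aₗᵀ u*| + Σ_{k=1}^{q−1} |A_{∖ℓ}ᵀ u*|_{[k]} ≤ |aₗᵀ c| + Σ_{k=r}^{q−1} |A_{∖ℓ}ᵀ c|_{[k]} + (q − r + 1) R + λ Σ_{k=1}^{r−1} w_k, assuming all columns of A have unit ℓ2 norm. -/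
open Finset Matrix

lemma sort_antitone {N : ℕ} (b : Fin N → ℝ) :
    Antitone (b ∘ Tuple.sort (fun i => -b i)) := by
  intro i j hij
  have := Tuple.monotone_sort (fun i => -b i) hij
  simpa using this

lemma card_filter_lt_fin {N k : ℕ} (hk : k ≤ N) :
    (Finset.univ.filter (fun i : Fin N => (i : ℕ) < k)).card = k := by
  have : Finset.univ.filter (fun i : Fin N => (i : ℕ) < k)
      = (Finset.univ : Finset (Fin k)).map ⟨Fin.castLE hk, Fin.castLE_injective hk⟩ := by
    ext i
    simp only [Finset.mem_filter, Finset.mem_univ, true_and, Finset.mem_map,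
      Function.Embedding.coeFn_mk]
    constructor
    · intro h; exact ⟨⟨i, h⟩, by ext; rfl⟩
    · rintro ⟨j, rfl⟩; exact j.isLt
  simp [this]

lemma card_le_of_le_kth {N : ℕ} (b : Fin N → ℝ) (k : ℕ) (hk : k < N) :
    k + 1 ≤ (Finset.univ.filter (fun j => kth b k ≤ b j)).card := by
  classical
  set σ := Tuple.sort (fun i => -b i) with hσ
  have hkth : kth b k = b (σ ⟨k, hk⟩) := by rw [kth, dif_pos hk]
  have hsub : (Finset.univ.filter (fun i : Fin N => (i : ℕ) < k + 1)).image σ ⊆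
      Finset.univ.filter (fun j => kth b k ≤ b j) := by
    intro j hj
    simp only [Finset.mem_image, Finset.mem_filter, Finset.mem_univ, true_and] at hj ⊢
    obtain ⟨i, hi, rfl⟩ := hj
    rw [hkth]
    exact sort_antitone b (show i ≤ ⟨k, hk⟩ from Fin.le_def.2 (Nat.lt_succ_iff.mp hi))
  have hcard : ((Finset.univ.filter (fun i : Fin N => (i : ℕ) < k + 1)).image σ).card = k + 1 := by
    rw [Finset.card_image_of_injective _ σ.injective, card_filter_lt_fin hk]
  calc k + 1 = _ := hcard.symm
    _ ≤ _ := Finset.card_le_card hsub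

lemma le_kth_of_card {N : ℕ} (b : Fin N → ℝ) (k : ℕ) (hk : k < N) (t : ℝ)
    (h : k + 1 ≤ (Finset.univ.filter (fun j => t ≤ b j)).card) : t ≤ kth b k := by
  classical
  set σ := Tuple.sort (fun i => -b i) with hσ
  have hkth : kth b k = b (σ ⟨k, hk⟩) := by rw [kth, dif_pos hk]
  set F := Finset.univ.filter (fun j => t ≤ b j) with hF
  set T := F.image σ.symm with hT
  have hTcard : k + 1 ≤ T.card := by
    rw [hT, Finset.card_image_of_injective _ σ.symm.injective]; exact h
  have : ∃ i ∈ T, k ≤ (i : ℕ) := by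
    by_contra hcon
    push_neg at hcon
    have hsub : T ⊆ Finset.univ.filter (fun i : Fin N => (i : ℕ) < k) := by
      intro i hi
      simp only [Finset.mem_filter, Finset.mem_univ, true_and]
      exact hcon i hi
    have := Finset.card_le_card hsub
    rw [card_filter_lt_fin (le_of_lt hk)] at this
    omega
  obtain ⟨i, hiT, hki⟩ := this
  obtain ⟨j, hjF, hji⟩ := Finset.mem_image.1 hiT
  have hbj : t ≤ b j := (Finset.mem_filter.1 hjF).2
  have hσi : σ i = j := by rw [← hji]; simp
  have := sort_antitone b (show (⟨k, hk⟩ : Fin N) ≤ i from Fin.le_def.2 hki)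
  simp only [Function.comp] at this
  rw [hσi] at this
  rw [hkth]
  exact le_trans hbj this

lemma kth_le_kth_add {N : ℕ} (a b : Fin N → ℝ) (R : ℝ)
    (h : ∀ j, a j ≤ b j + R) (k : ℕ) (hk : k < N) :
    kth a k ≤ kth b k + R := by
  have h1 := card_le_of_le_kth a k hk
  have h2 : (Finset.univ.filter (fun j => kth a k ≤ a j)).card ≤
      (Finset.univ.filter (fun j => kth a k - R ≤ b j)).card := by
    apply Finset.card_le_card
    intro j hj
    simp only [Finset.mem_filter, Finset.mem_univ, true_and] at hj ⊢
    linarith [h j]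
  have := le_kth_of_card b k hk _ (le_trans h1 h2)
  linarith
def embAux {n : ℕ} (ℓ : Fin n) (j : Fin (n - 1)) : Fin n :=
  if h : (j : ℕ) < (ℓ : ℕ) then ⟨j, lt_trans h ℓ.isLt⟩
  else ⟨(j : ℕ) + 1, by have := j.isLt; omega⟩

lemma dropIdx_eq_embAux {n : ℕ} (ℓ : Fin n) (v : Fin n → ℝ) (j : Fin (n - 1)) :
    dropIdx ℓ v j = v (embAux ℓ j) := by
  unfold dropIdx embAux
  split <;> rfl

lemma embAux_injective {n : ℕ} (ℓ : Fin n) : Function.Injective (embAux ℓ) := by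
  intro j1 j2 h
  have hval := congrArg Fin.val h
  unfold embAux at hval
  split_ifs at hval with h1 h2 h2 <;> simp only [] at hval <;> exact Fin.ext (by omega)

lemma kth_dropIdx_le {n : ℕ} (ℓ : Fin n) (v : Fin n → ℝ) (k : ℕ) (hk : k < n - 1) :
    absKth (dropIdx ℓ v) k ≤ absKth v k := by
  have hk' : k < n := by omega
  apply le_kth_of_card _ k hk'
  refine le_trans (card_le_of_le_kth (fun j => |dropIdx ℓ v j|) k hk) ?_
  apply Finset.card_le_card_of_injOn (embAux ℓ)
  · intro j hj
    simp only [Finset.mem_coe, Finset.mem_filter, Finset.mem_univ, true_and] at hj ⊢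
    rw [← dropIdx_eq_embAux ℓ v j]
    exact hj
  · exact Function.Injective.injOn (embAux_injective ℓ)

theorem slope_upper_bound {m n : ℕ} (hn : 0 < n)
    (A : Matrix (Fin m) (Fin n) ℝ)
    (hunit : ∀ j : Fin n, ∑ i, (A i j) ^ 2 = 1)
    (w : ℕ → ℝ) (hw0 : 0 < w 0)
    (hwa : ∀ i j : ℕ, i ≤ j → j < n → w j ≤ w i) (hwn : 0 ≤ w (n - 1))
    (lam : ℝ) (hlam : 0 < lam)
    (c : Fin m → ℝ) (R : ℝ) (hR : 0 ≤ R)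
    (ustar : Fin m → ℝ)
    (hball : ∑ i, (ustar i - c i) ^ 2 ≤ R ^ 2)
    (hfeas : ∀ q < n, ∑ k ∈ Finset.range (q + 1), absKth (Aᵀ *ᵥ ustar) k ≤
        lam * ∑ k ∈ Finset.range (q + 1), w k) :
    ∀ ℓ : Fin n, ∀ q < n, ∀ r ≤ q,
      |∑ i, A i ℓ * ustar i| +
        ∑ k ∈ Finset.range q, absKth (dropIdx ℓ (fun j => ∑ i, A i j * ustar i)) k ≤
      |∑ i, A i ℓ * c i| +
        ∑ k ∈ Finset.Ico r q, absKth (dropIdx ℓ (fun j => ∑ i, A i j * c i)) k +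
        ((q - r + 1 : ℕ) : ℝ) * R + lam * ∑ k ∈ Finset.range r, w k := by
  intro ℓ q hq r hr
  set v : Fin n → ℝ := fun j => ∑ i, A i j * ustar i with hv
  set vc : Fin n → ℝ := fun j => ∑ i, A i j * c i with hvc
  -- pointwise Cauchy-Schwarz bound
  have hdiff : ∀ j : Fin n, |v j - vc j| ≤ R := by
    intro j
    have hsum : v j - vc j = ∑ i, A i j * (ustar i - c i) := by
      rw [hv, hvc]
      simp only [mul_sub]
      rw [Finset.sum_sub_distrib]
    have hcs := Finset.sum_mul_sq_le_sq_mul_sq Finset.univ (fun i => A i j)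
      (fun i => ustar i - c i)
    rw [hunit j, one_mul] at hcs
    have h2 : (v j - vc j) ^ 2 ≤ R ^ 2 := by
      rw [hsum]
      exact le_trans hcs hball
    rcases abs_cases (v j - vc j) with ⟨h3, _⟩ | ⟨h3, _⟩ <;> nlinarith
  have habs : ∀ j : Fin n, |v j| ≤ |vc j| + R := by
    intro j
    have := abs_sub_abs_le_abs_sub (v j) (vc j)
    linarith [hdiff j]
  -- rewrite feasibility
  have hAv : Aᵀ *ᵥ ustar = v := by
    funext j
    simp [Matrix.mulVec, dotProduct, hv, Matrix.transpose_apply]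
  rw [hAv] at hfeas
  -- head bound
  have hhead : ∑ k ∈ Finset.range r, absKth v k ≤ lam * ∑ k ∈ Finset.range r, w k := by
    rcases Nat.eq_zero_or_pos r with h0 | hrpos
    · simp [h0]
    · obtain ⟨s, rfl⟩ : ∃ s, r = s + 1 := ⟨r - 1, by omega⟩
      exact hfeas s (by omega)
  have hhead2 : ∑ k ∈ Finset.range r, absKth (dropIdx ℓ v) k ≤
      ∑ k ∈ Finset.range r, absKth v k := by
    apply Finset.sum_le_sum
    intro k hk
    rw [Finset.mem_range] at hk
    exact kth_dropIdx_le ℓ v k (by omega)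
  -- tail bound
  have htail : ∑ k ∈ Finset.Ico r q, absKth (dropIdx ℓ v) k ≤
      ∑ k ∈ Finset.Ico r q, absKth (dropIdx ℓ vc) k + ((q - r : ℕ) : ℝ) * R := by
    have hpt : ∀ k ∈ Finset.Ico r q,
        absKth (dropIdx ℓ v) k ≤ absKth (dropIdx ℓ vc) k + R := by
      intro k hk
      rw [Finset.mem_Ico] at hk
      apply kth_le_kth_add
      · intro j
        rw [dropIdx_eq_embAux, dropIdx_eq_embAux]
        exact habs (embAux ℓ j)
      · omega
    calc ∑ k ∈ Finset.Ico r q, absKth (dropIdx ℓ v) k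
        ≤ ∑ k ∈ Finset.Ico r q, (absKth (dropIdx ℓ vc) k + R) := Finset.sum_le_sum hpt
      _ = ∑ k ∈ Finset.Ico r q, absKth (dropIdx ℓ vc) k + ((q - r : ℕ) : ℝ) * R := by
          rw [Finset.sum_add_distrib, Finset.sum_const, Nat.card_Ico, nsmul_eq_mul]
  -- split the sum
  have hsplit : ∑ k ∈ Finset.range q, absKth (dropIdx ℓ v) k =
      ∑ k ∈ Finset.range r, absKth (dropIdx ℓ v) k +
      ∑ k ∈ Finset.Ico r q, absKth (dropIdx ℓ v) k := by
    rw [Finset.range_eq_Ico, Finset.range_eq_Ico]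
    exact (Finset.sum_Ico_consecutive _ (Nat.zero_le r) hr).symm
  have hvl : |v ℓ| ≤ |vc ℓ| + R := habs ℓ
  have hcast : ((q - r + 1 : ℕ) : ℝ) = ((q - r : ℕ) : ℝ) + 1 := by push_cast; ring
  rw [show (∑ i, A i ℓ * ustar i) = v ℓ from rfl, show (∑ i, A i ℓ * c i) = vc ℓ from rfl]
  rw [hsplit, hcast]
  linarith
end

section
/- Assume the entries of |Aᵀ c| are sorted nonincreasingly: |a₁ᵀ c| ≥ |a₂ᵀ c| ≥ ... ≥ |a_nᵀ c|, all columns of A are unit-norm, and define B_{q,ℓ} = |aₗᵀ c| + Σ_{k=r}^{q−1} |A_{∖ℓ}ᵀ c|_{[k]} + (q − r + 1) R + λ Σ_{k=1}^{r−1} w_k for fixed r ∈ {1,...,q}. Then for every q, the map ℓ ↦ B_{q,ℓ} is nonincreasing: ℓ < ℓ' implies B_{q,ℓ} ≥ B_{q,ℓ'}. -/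
open Finset Matrix

lemma kth_antitone {N : ℕ} (v : Fin N → ℝ) (hv : Antitone v) {k : ℕ} (hk : k < N) :
    kth v k = v ⟨k, hk⟩ := by
  have hmono : Monotone (fun i : Fin N => -v i) := fun i j h => neg_le_neg (hv h)
  rw [kth, dif_pos hk, (Tuple.sort_eq_refl_iff_monotone).2 hmono]
  rfl

lemma dropIdx_antitone {N : ℕ} (ℓ : Fin N) (v : Fin N → ℝ) (hv : Antitone v) :
    Antitone (dropIdx ℓ v) := by
  intro j j' h
  have hn : (j : ℕ) ≤ (j' : ℕ) := h
  unfold dropIdx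
  split_ifs with h1 h2 h2
  · exact hv (Fin.mk_le_mk.2 hn)
  · omega
  · exact hv (Fin.mk_le_mk.2 (by omega))
  · exact hv (Fin.mk_le_mk.2 (by omega))

lemma telescope (U : ℕ → ℝ) {a b : ℕ} (hab : a ≤ b) :
    ∑ k ∈ Finset.Ico a b, (U k - U (k+1)) = U a - U b := by
  rw [Finset.sum_Ico_eq_sum_range]
  have h := Finset.sum_range_sub' (fun i => U (a + i)) (b - a)
  simpa [Nat.add_sub_cancel' hab, Nat.add_assoc] using h

lemma key_ineq (U : ℕ → ℝ) (hU : Antitone U) (r q l l' : ℕ) (hll : l ≤ l') :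
    U l' + ∑ k ∈ Finset.Ico r q, (if k < l' then U k else U (k+1)) ≤
    U l + ∑ k ∈ Finset.Ico r q, (if k < l then U k else U (k+1)) := by
  have hsum : ∑ k ∈ Finset.Ico r q,
      ((if k < l' then U k else U (k+1)) - (if k < l then U k else U (k+1)))
      = ∑ k ∈ Finset.Ico (max r l) (min q l'), (U k - U (k+1)) := by
    rw [← Finset.Ico_inter_Ico, ← Finset.sum_subset Finset.inter_subset_left]
    · apply Finset.sum_congr rfl
      intro k hk
      simp only [Finset.mem_inter, Finset.mem_Ico] at hk
      rw [if_pos (by omega), if_neg (by omega)]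
    · intro k hk hk'
      simp only [Finset.mem_inter, Finset.mem_Ico] at hk hk'
      split_ifs with h1 h2 h2 <;> [exact sub_self _; omega; omega; exact sub_self _]
  have htel : ∑ k ∈ Finset.Ico (max r l) (min q l'), (U k - U (k+1)) ≤ U l - U l' := by
    rcases le_or_gt (min q l') (max r l) with h | h
    · rw [Finset.Ico_eq_empty (not_lt.2 h), Finset.sum_empty]
      have := hU hll
      linarith
    · rw [telescope U h.le]
      have h1 : U (max r l) ≤ U l := hU (le_max_right r l)
      have h2 : U l' ≤ U (min q l') := hU (min_le_right q l')
      linarith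
  rw [Finset.sum_sub_distrib] at hsum
  linarith [hsum, htel]

lemma absKth_dropIdx {N : ℕ} (v : Fin N → ℝ) (hv : Antitone (fun j => |v j|)) (ℓ : Fin N)
    (U : ℕ → ℝ) (hUeq : ∀ j : Fin N, U (j : ℕ) = |v j|) {k : ℕ} (hk : k < N - 1) :
    absKth (dropIdx ℓ v) k = if (k : ℕ) < (ℓ : ℕ) then U k else U (k+1) := by
  have habs : (fun i => |dropIdx ℓ v i|) = dropIdx ℓ (fun j => |v j|) := by
    funext i; unfold dropIdx; split_ifs <;> rfl
  rw [absKth, habs, kth_antitone _ (dropIdx_antitone ℓ _ hv) hk]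
  unfold dropIdx
  split_ifs with h
  · exact (hUeq ⟨k, by omega⟩).symm
  · exact (hUeq ⟨k+1, by omega⟩).symm

theorem B_nonincreasing {m n : ℕ} (A : Matrix (Fin m) (Fin n) ℝ) (c : Fin m → ℝ)
    (hsort : ∀ j j' : Fin n, j ≤ j' → |∑ i, A i j' * c i| ≤ |∑ i, A i j * c i|)
    (hunit : ∀ j : Fin n, ∑ i, (A i j) ^ 2 = 1)
    (R : ℝ) (hR : 0 ≤ R) (lam : ℝ) (hlam : 0 < lam)
    (w : ℕ → ℝ) (hwa : ∀ i j : ℕ, i ≤ j → j < n → w j ≤ w i) (hwn : 0 ≤ w (n - 1)) :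
    ∀ q < n, ∀ r ≤ q, ∀ ℓ ℓ' : Fin n, ℓ < ℓ' →
      |∑ i, A i ℓ' * c i| +
        ∑ k ∈ Finset.Ico r q, absKth (dropIdx ℓ' (fun j => ∑ i, A i j * c i)) k +
        ((q - r + 1 : ℕ) : ℝ) * R + lam * ∑ k ∈ Finset.range r, w k ≤
      |∑ i, A i ℓ * c i| +
        ∑ k ∈ Finset.Ico r q, absKth (dropIdx ℓ (fun j => ∑ i, A i j * c i)) k +
        ((q - r + 1 : ℕ) : ℝ) * R + lam * ∑ k ∈ Finset.range r, w k := by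
  intro q hq r hr ℓ ℓ' hll
  set v : Fin n → ℝ := fun j => ∑ i, A i j * c i with hv
  have hu : Antitone (fun j : Fin n => |v j|) := fun j j' h => hsort j j' h
  set U : ℕ → ℝ := fun k => if h : k < n then |v ⟨k, h⟩| else 0 with hUdef
  have hUeq : ∀ j : Fin n, U (j : ℕ) = |v j| := by
    intro j
    simp only [hUdef, dif_pos j.isLt, Fin.eta]
  have hU : Antitone U := by
    intro k k' hk
    simp only [hUdef]
    split_ifs with h1 h2 h2
    · exact hu (Fin.mk_le_mk.2 hk)
    · omega
    · exact abs_nonneg _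
    · exact le_refl 0
  have h1 : ∀ k ∈ Finset.Ico r q, absKth (dropIdx ℓ v) k
      = if k < (ℓ : ℕ) then U k else U (k+1) := by
    intro k hk
    simp only [Finset.mem_Ico] at hk
    exact absKth_dropIdx v hu ℓ U hUeq (by omega)
  have h2 : ∀ k ∈ Finset.Ico r q, absKth (dropIdx ℓ' v) k
      = if k < (ℓ' : ℕ) then U k else U (k+1) := by
    intro k hk
    simp only [Finset.mem_Ico] at hk
    exact absKth_dropIdx v hu ℓ' U hUeq (by omega)
  rw [Finset.sum_congr rfl h1, Finset.sum_congr rfl h2, ← hUeq ℓ, ← hUeq ℓ']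
  have := key_ineq U hU r q ℓ ℓ' (le_of_lt hll)
  linarith
end

section
/- The OSCAR penalty β₁‖x‖₁ + β₂ Σ_{j' > j} max(|x_{j'}|, |x_j|) equals the SLOPE norm Σ_{k=1}^{n} w_k |x|_{[k]} with weights w_k = β₁ + β₂ (n − k), for all x ∈ ℝ^n and all β₁, β₂ ≥ 0. -/
open Finset Matrix

/-- The strict lower-triangular pair sum. -/
private noncomputable def pairSum {n : ℕ} (g : Fin n → Fin n → ℝ) : ℝ :=
  ∑ j' : Fin n, ∑ j ∈ Finset.univ.filter (fun j => j < j'), g j j'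

private lemma two_pairSum {n : ℕ} (g : Fin n → Fin n → ℝ) (hg : ∀ i j, g i j = g j i) :
    2 * pairSum g = (∑ j : Fin n, ∑ j' : Fin n, g j j') - ∑ j : Fin n, g j j := by
  have hsplit : ∀ j' : Fin n, (∑ j : Fin n, g j j') =
      (∑ j ∈ Finset.univ.filter (fun j => j < j'), g j j') + g j' j' +
        ∑ j ∈ Finset.univ.filter (fun j => j' < j), g j j' := by
    intro j'
    rw [← Finset.sum_filter_add_sum_filter_not Finset.univ (fun j => j < j') (fun j => g j j'),
      add_assoc]
    congr 1
    have : Finset.univ.filter (fun j => ¬ j < j') =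
        insert j' (Finset.univ.filter (fun j => j' < j)) := by
      ext j
      simp [Finset.mem_insert, ← le_antisymm_iff, eq_comm, le_iff_lt_or_eq, or_comm,
        not_lt, le_iff_eq_or_lt]
    rw [this, Finset.sum_insert (by simp)]
  have hswap : (∑ j' : Fin n, ∑ j ∈ Finset.univ.filter (fun j => j' < j), g j j') = pairSum g := by
    rw [Finset.sum_comm' (t' := Finset.univ)
      (s' := fun j : Fin n => Finset.univ.filter (fun j'' => j'' < j)) (by simp)]
    unfold pairSum
    exact Finset.sum_congr rfl fun j _ => Finset.sum_congr rfl fun j' _ => hg j j'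
  have : (∑ j' : Fin n, ∑ j : Fin n, g j j') =
      pairSum g + (∑ j : Fin n, g j j) + pairSum g := by
    rw [Finset.sum_congr rfl fun j' _ => hsplit j', Finset.sum_add_distrib,
      Finset.sum_add_distrib, hswap]
    rfl
  rw [Finset.sum_comm] at this
  rw [this]; ring

private lemma pairSum_perm {n : ℕ} (g : Fin n → Fin n → ℝ) (hg : ∀ i j, g i j = g j i)
    (σ : Equiv.Perm (Fin n)) : pairSum g = pairSum (fun i j => g (σ i) (σ j)) := by
  have h1 := two_pairSum g hg
  have h2 := two_pairSum (fun i j => g (σ i) (σ j)) (fun i j => hg _ _)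
  have hT : (∑ j : Fin n, ∑ j' : Fin n, g (σ j) (σ j')) = ∑ j : Fin n, ∑ j' : Fin n, g j j' := by
    rw [Equiv.sum_comp σ (fun j => ∑ j' : Fin n, g j (σ j'))]
    exact Finset.sum_congr rfl fun j _ => Equiv.sum_comp σ (fun j' => g j j')
  have hD : (∑ j : Fin n, g (σ j) (σ j)) = ∑ j : Fin n, g j j :=
    Equiv.sum_comp σ (fun j => g j j)
  have : 2 * pairSum g = 2 * pairSum (fun i j => g (σ i) (σ j)) := by
    rw [h1, h2, hT, hD]
  linarith

theorem oscar_eq_slope {n : ℕ} (β₁ β₂ : ℝ) (hβ₁ : 0 ≤ β₁) (hβ₂ : 0 ≤ β₂)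
    (x : Fin n → ℝ) :
    β₁ * ∑ j, |x j| +
      β₂ * ∑ j' : Fin n, ∑ j ∈ Finset.univ.filter (fun j => j < j'), max |x j'| |x j| =
    slopeNorm (fun k => β₁ + β₂ * ((n - 1 - k : ℕ) : ℝ)) x := by
  set σ : Equiv.Perm (Fin n) := Tuple.sort (fun i => -|x i|) with hσ
  set a : Fin n → ℝ := fun k => |x (σ k)| with ha
  have hanti : ∀ k k' : Fin n, k ≤ k' → a k' ≤ a k := by
    intro k k' hkk'
    have := Tuple.monotone_sort (fun i => -|x i|) hkk'
    simpa [ha, hσ] using this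
  have habs : ∀ k : Fin n, absKth x (k : ℕ) = a k := by
    intro k
    simp only [absKth, kth, ha]
    rw [dif_pos k.isLt]
  -- first sum
  have h1 : (∑ j, |x j|) = ∑ k : Fin n, a k := (Equiv.sum_comp σ (fun j => |x j|)).symm
  -- second sum
  have h2 : (∑ j' : Fin n, ∑ j ∈ Finset.univ.filter (fun j => j < j'), max |x j'| |x j|)
      = ∑ k : Fin n, ((n - 1 - (k : ℕ) : ℕ) : ℝ) * a k := by
    have hg : ∀ i j : Fin n, max |x j| |x i| = max |x i| |x j| := fun i j => max_comm _ _
    have := pairSum_perm (fun u v => max |x v| |x u|) hg σ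
    unfold pairSum at this
    rw [this]
    have step : ∀ k' : Fin n, (∑ k ∈ Finset.univ.filter (fun k => k < k'),
        max |x (σ k')| |x (σ k)|) = ∑ k ∈ Finset.univ.filter (fun k => k < k'), a k := by
      intro k'
      refine Finset.sum_congr rfl fun k hk => ?_
      rw [Finset.mem_filter] at hk
      exact max_eq_right (hanti k k' hk.2.le)
    rw [Finset.sum_congr rfl fun k' _ => step k']
    rw [Finset.sum_comm' (t' := Finset.univ)
      (s' := fun k : Fin n => Finset.univ.filter (fun k'' => k < k'')) (by simp)]
    refine Finset.sum_congr rfl fun k _ => ?_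
    rw [Finset.sum_const, nsmul_eq_mul]
    congr 1
    have : Finset.univ.filter (fun k'' => k < k'') = Finset.Ioi k := by
      ext; simp
    rw [this, Fin.card_Ioi]
  rw [h1, h2, slopeNorm, ← Fin.sum_univ_eq_sum_range
      (fun k => (β₁ + β₂ * ((n - 1 - k : ℕ) : ℝ)) * absKth x k)]
  rw [Finset.mul_sum, Finset.mul_sum, ← Finset.sum_add_distrib]
  refine Finset.sum_congr rfl fun k _ => ?_
  rw [habs k]
  ring
end
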